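/- arXiv:1907.05325 — 3 statements merged into one kernel-verified Lean document; each statement's English description precedes it below -/
import Mathlib

section
/- (Deterministic recovery bound for nuclear-norm-regularized least squares.) Let p > 0, λ > 0, let M be an entrywise-nonnegative m×n real matrix of rank at most r, and let Y be any m×n real matrix with ‖Y − pM‖ ≤ λ/(2p). If M̂ minimizes ‖Y − pM'‖_F² + λ‖M'‖_* over all entrywise-nonnegative m×n matrices M', then ‖M̂ − M‖_F ≤ 2√(2r)·λ/p². -/
open MeasureTheory ProbabilityTheory Real Matrix

/-- Frobenius norm of a real matrix. -/
noncomputable def frobNorm {m n : ℕ} (A : Matrix (Fin m) (Fin n) ℝ) : ℝ :=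
  Real.sqrt (∑ i, ∑ j, (A i j)^2)

/-- ℓ2→ℓ2 operator norm of a real matrix. -/
noncomputable def opNorm {m n : ℕ} (A : Matrix (Fin m) (Fin n) ℝ) : ℝ :=
  ‖LinearMap.toContinuousLinearMap (Matrix.toEuclideanLin A)‖

/-- Nuclear norm: trace of the psd square root of Aᵀ * A. -/
noncomputable def nucNorm {m n : ℕ} (A : Matrix (Fin m) (Fin n) ℝ) : ℝ :=
  let hA := (Matrix.posSemidef_conjTranspose_mul_self A).1
  ((hA.eigenvectorUnitary : Matrix (Fin n) (Fin n) ℝ) *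
    Matrix.diagonal (fun i => Real.sqrt (hA.eigenvalues i)) *
    (star hA.eigenvectorUnitary : Matrix (Fin n) (Fin n) ℝ)).trace

namespace Matrix.PosSemidef

noncomputable def sqrt {k : ℕ} {A : Matrix (Fin k) (Fin k) ℝ} (hA : A.PosSemidef) :
    Matrix (Fin k) (Fin k) ℝ :=
  (hA.1.eigenvectorUnitary : Matrix (Fin k) (Fin k) ℝ) *
    Matrix.diagonal (fun i => Real.sqrt (hA.1.eigenvalues i)) *
    (star hA.1.eigenvectorUnitary : Matrix (Fin k) (Fin k) ℝ)

open scoped MatrixOrder in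
lemma sqrt_eq_cfc {k : ℕ} {A : Matrix (Fin k) (Fin k) ℝ} (hA : A.PosSemidef) :
    hA.sqrt = CFC.sqrt A := by
  rw [CFC.sqrt_eq_real_sqrt A hA.nonneg, cfcₙ_eq_cfc, hA.1.cfc_eq, IsHermitian.cfc,
    Unitary.conjStarAlgAut_apply]
  rfl

open scoped MatrixOrder in
lemma posSemidef_sqrt {k : ℕ} {A : Matrix (Fin k) (Fin k) ℝ} (hA : A.PosSemidef) :
    hA.sqrt.PosSemidef := by
  rw [sqrt_eq_cfc]; exact (CFC.sqrt_nonneg A).posSemidef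

open scoped MatrixOrder in
lemma sqrt_mul_self {k : ℕ} {A : Matrix (Fin k) (Fin k) ℝ} (hA : A.PosSemidef) :
    hA.sqrt * hA.sqrt = A := by
  rw [sqrt_eq_cfc]; exact CFC.sqrt_mul_sqrt_self A hA.nonneg

open scoped MatrixOrder in
lemma eq_sqrt_of_sq_eq {k : ℕ} {A B : Matrix (Fin k) (Fin k) ℝ} (hB : B.PosSemidef)
    (hA : A.PosSemidef) (h : B ^ 2 = A) : B = hA.sqrt := by
  rw [sqrt_eq_cfc]; exact (CFC.sqrt_unique (by rw [← sq]; exact h) hB.nonneg).symm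

end Matrix.PosSemidef

lemma nucNorm_eq_sqrt {m n : ℕ} (A : Matrix (Fin m) (Fin n) ℝ) :
    nucNorm A = (Matrix.posSemidef_conjTranspose_mul_self A).sqrt.trace := rfl

namespace StmtAux

noncomputable def finner {m n : ℕ} (A B : Matrix (Fin m) (Fin n) ℝ) : ℝ :=
  ∑ i, ∑ j, A i j * B i j

variable {m n k : ℕ}

lemma finner_comm (A B : Matrix (Fin m) (Fin n) ℝ) : finner A B = finner B A := by
  unfold finner; congr 1; ext i; congr 1; ext j; ring

lemma finner_self_nonneg (A : Matrix (Fin m) (Fin n) ℝ) : 0 ≤ finner A A := by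
  unfold finner
  exact Finset.sum_nonneg fun i _ => Finset.sum_nonneg fun j _ => mul_self_nonneg _

lemma frobNorm_eq (A : Matrix (Fin m) (Fin n) ℝ) : frobNorm A = Real.sqrt (finner A A) := by
  unfold frobNorm finner; congr 1; simp [sq]

lemma frobNorm_nonneg (A : Matrix (Fin m) (Fin n) ℝ) : 0 ≤ frobNorm A :=
  Real.sqrt_nonneg _

lemma frobNorm_sq (A : Matrix (Fin m) (Fin n) ℝ) : frobNorm A ^ 2 = finner A A := by
  rw [frobNorm_eq, Real.sq_sqrt (finner_self_nonneg A)]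

lemma finner_add_right (A B C : Matrix (Fin m) (Fin n) ℝ) :
    finner A (B + C) = finner A B + finner A C := by
  unfold finner; rw [← Finset.sum_add_distrib]; congr 1; ext i
  rw [← Finset.sum_add_distrib]; congr 1; ext j; simp [Matrix.add_apply]; ring

lemma finner_add_left (A B C : Matrix (Fin m) (Fin n) ℝ) :
    finner (A + B) C = finner A C + finner B C := by
  rw [finner_comm, finner_add_right, finner_comm C A, finner_comm C B]

lemma finner_smul_right (c : ℝ) (A B : Matrix (Fin m) (Fin n) ℝ) :
    finner A (c • B) = c * finner A B := by
  unfold finner; rw [Finset.mul_sum]; congr 1; ext i; rw [Finset.mul_sum]; congr 1; ext j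
  simp [Matrix.smul_apply]; ring

lemma finner_eq_trace (A B : Matrix (Fin m) (Fin n) ℝ) :
    finner A B = (Aᴴ * B).trace := by
  unfold finner
  rw [Matrix.trace, Finset.sum_comm]
  simp [Matrix.mul_apply, Matrix.diag, Matrix.conjTranspose_apply, mul_comm]

end StmtAux

namespace StmtAux

noncomputable def enorm {k : ℕ} (x : Fin k → ℝ) : ℝ :=
  ‖(WithLp.equiv 2 (Fin k → ℝ)).symm x‖

lemma enorm_eq {k : ℕ} (x : Fin k → ℝ) : enorm x = Real.sqrt (x ⬝ᵥ x) := by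
  unfold enorm
  rw [EuclideanSpace.norm_eq]
  congr 1
  simp [dotProduct, sq]

lemma enorm_nonneg {k : ℕ} (x : Fin k → ℝ) : 0 ≤ enorm x := norm_nonneg _

lemma enorm_sq {k : ℕ} (x : Fin k → ℝ) : enorm x ^ 2 = x ⬝ᵥ x := by
  rw [enorm_eq, Real.sq_sqrt]
  exact Finset.sum_nonneg fun i _ => mul_self_nonneg _

lemma opNorm_nonneg (A : Matrix (Fin m) (Fin n) ℝ) : 0 ≤ opNorm A := norm_nonneg _

lemma enorm_mulVec_le (A : Matrix (Fin m) (Fin n) ℝ) (x : Fin n → ℝ) :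
    enorm (A *ᵥ x) ≤ opNorm A * enorm x := by
  unfold enorm opNorm
  have h := (LinearMap.toContinuousLinearMap (Matrix.toEuclideanLin A)).le_opNorm
    ((WithLp.equiv 2 (Fin n → ℝ)).symm x)
  simpa [Matrix.toLpLin_toLp] using h

lemma opNorm_le (A : Matrix (Fin m) (Fin n) ℝ) (c : ℝ) (hc : 0 ≤ c)
    (h : ∀ x : Fin n → ℝ, enorm (A *ᵥ x) ≤ c * enorm x) : opNorm A ≤ c := by
  unfold opNorm
  refine ContinuousLinearMap.opNorm_le_bound _ hc fun y => ?_
  have h2 := h ((WithLp.equiv 2 (Fin n → ℝ)) y)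
  unfold enorm at h2
  simpa [Matrix.toEuclideanLin_apply] using h2

lemma dot_le_enorm (x y : Fin k → ℝ) : x ⬝ᵥ y ≤ enorm x * enorm y := by
  have h := real_inner_le_norm ((WithLp.equiv 2 (Fin k → ℝ)).symm x)
    ((WithLp.equiv 2 (Fin k → ℝ)).symm y)
  rw [PiLp.inner_apply] at h
  unfold enorm
  simpa [dotProduct, RCLike.inner_apply, mul_comm] using h

end StmtAux

namespace StmtAux

section Spectral

variable {k : ℕ} {H : Matrix (Fin k) (Fin k) ℝ} (hH : H.IsHermitian)

noncomputable def evec (i : Fin k) : Fin k → ℝ := ⇑(hH.eigenvectorBasis i)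

lemma evec_dot (i j : Fin k) :
    (evec hH i) ⬝ᵥ (evec hH j) = if i = j then 1 else 0 := by
  have h := (hH.eigenvectorBasis).orthonormal
  rw [orthonormal_iff_ite] at h
  have h2 := h i j
  rw [PiLp.inner_apply] at h2
  simpa [dotProduct, evec, RCLike.inner_apply, mul_comm] using h2

lemma evec_complete :
    ∑ i, Matrix.vecMulVec (evec hH i) (evec hH i) = (1 : Matrix (Fin k) (Fin k) ℝ) := by
  have h : (hH.eigenvectorUnitary : Matrix (Fin k) (Fin k) ℝ) *
      star (hH.eigenvectorUnitary : Matrix (Fin k) (Fin k) ℝ) = 1 :=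
    (Matrix.mem_unitaryGroup_iff).mp hH.eigenvectorUnitary.2
  ext i j
  rw [← h, Matrix.mul_apply]
  simp only [Matrix.sum_apply, Matrix.vecMulVec_apply]
  simp [evec, Matrix.IsHermitian.eigenvectorUnitary_apply, Matrix.star_apply, mul_comm]

lemma spectral_sum :
    H = ∑ i, hH.eigenvalues i • Matrix.vecMulVec (evec hH i) (evec hH i) := by
  conv_lhs => rw [hH.spectral_theorem, Unitary.conjStarAlgAut_apply]
  ext i j
  rw [Matrix.mul_apply]
  simp only [Matrix.sum_apply, Matrix.smul_apply, Matrix.vecMulVec_apply, smul_eq_mul]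
  congr 1; ext l
  simp [Matrix.mul_apply, Matrix.diagonal, Matrix.star_apply, evec,
    Matrix.IsHermitian.eigenvectorUnitary_apply, Finset.sum_ite_eq, mul_comm, mul_assoc]

lemma mulVec_evec (j : Fin k) : H *ᵥ evec hH j = hH.eigenvalues j • evec hH j := by
  simpa [evec] using hH.mulVec_eigenvectorBasis j

end Spectral

end StmtAux

namespace StmtAux

variable {m n k : ℕ}

lemma sqrt_congr {A B : Matrix (Fin k) (Fin k) ℝ} (h : A = B)
    (hA : A.PosSemidef) (hB : B.PosSemidef) : hA.sqrt = hB.sqrt := by subst h; rfl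

lemma nucNorm_eq_sum (A : Matrix (Fin m) (Fin n) ℝ) :
    nucNorm A = ∑ i, Real.sqrt
      ((Matrix.posSemidef_conjTranspose_mul_self A).1.eigenvalues i) := by
  rw [nucNorm_eq_sqrt]
  rw [Matrix.PosSemidef.sqrt, Matrix.trace_mul_comm, ← mul_assoc]
  have h : (star ((Matrix.posSemidef_conjTranspose_mul_self A).1.eigenvectorUnitary :
      Matrix (Fin n) (Fin n) ℝ)) *
      ((Matrix.posSemidef_conjTranspose_mul_self A).1.eigenvectorUnitary :
      Matrix (Fin n) (Fin n) ℝ) = 1 :=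
    (Matrix.mem_unitaryGroup_iff').mp
      (Matrix.posSemidef_conjTranspose_mul_self A).1.eigenvectorUnitary.2
  rw [h, one_mul, Matrix.trace_diagonal]

lemma nucNorm_nonneg (A : Matrix (Fin m) (Fin n) ℝ) : 0 ≤ nucNorm A := by
  rw [nucNorm_eq_sum]
  exact Finset.sum_nonneg fun i _ => Real.sqrt_nonneg _

lemma nucNorm_neg (A : Matrix (Fin m) (Fin n) ℝ) : nucNorm (-A) = nucNorm A := by
  rw [nucNorm_eq_sqrt, nucNorm_eq_sqrt]
  rw [sqrt_congr (show (-A)ᴴ * (-A) = Aᴴ * A by simp) _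
    (Matrix.posSemidef_conjTranspose_mul_self A)]

lemma dot_conjTranspose_mulVec (A : Matrix (Fin m) (Fin n) ℝ) (x : Fin n → ℝ)
    (z : Fin m → ℝ) : x ⬝ᵥ (Aᴴ *ᵥ z) = (A *ᵥ x) ⬝ᵥ z := by
  have : Aᴴ = Aᵀ := by ext i j; simp [Matrix.conjTranspose_apply]
  rw [this, Matrix.mulVec_transpose, dotProduct_comm,
    ← Matrix.dotProduct_mulVec, dotProduct_comm]

lemma dot_mulVec_mulVec (B : Matrix (Fin m) (Fin n) ℝ) (x y : Fin n → ℝ) :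
    (B *ᵥ x) ⬝ᵥ (B *ᵥ y) = x ⬝ᵥ ((Bᴴ * B) *ᵥ y) := by
  rw [← Matrix.mulVec_mulVec, dot_conjTranspose_mulVec]

lemma trace_mul_vecMulVec (M : Matrix (Fin k) (Fin k) ℝ) (a b : Fin k → ℝ) :
    (M * Matrix.vecMulVec a b).trace = b ⬝ᵥ (M *ᵥ a) := by
  rw [Matrix.trace, dotProduct]
  congr 1; ext i
  simp [Matrix.mul_apply, Matrix.vecMulVec_apply, Matrix.mulVec, dotProduct,
    Finset.mul_sum, mul_comm, mul_assoc, mul_left_comm]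

lemma finner_eq_sum_dot (A B : Matrix (Fin m) (Fin n) ℝ) (v : Fin n → (Fin n → ℝ))
    (hcomp : ∑ i, Matrix.vecMulVec (v i) (v i) = (1 : Matrix (Fin n) (Fin n) ℝ)) :
    finner A B = ∑ i, (A *ᵥ v i) ⬝ᵥ (B *ᵥ v i) := by
  rw [finner_eq_trace, ← mul_one (Aᴴ * B), ← hcomp, Finset.mul_sum, Matrix.trace_sum]
  congr 1; ext i
  rw [trace_mul_vecMulVec, ← Matrix.mulVec_mulVec, dot_conjTranspose_mulVec,
    dotProduct_comm]

end StmtAux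

namespace StmtAux

variable {m n k : ℕ}

lemma dot_mulVec_evec (B : Matrix (Fin m) (Fin n) ℝ) (i j : Fin n) :
    (B *ᵥ evec (Matrix.posSemidef_conjTranspose_mul_self B).1 i) ⬝ᵥ
      (B *ᵥ evec (Matrix.posSemidef_conjTranspose_mul_self B).1 j) =
    if i = j then (Matrix.posSemidef_conjTranspose_mul_self B).1.eigenvalues i else 0 := by
  rw [dot_mulVec_mulVec, mulVec_evec, dotProduct_smul, smul_eq_mul, evec_dot]
  by_cases h : i = j
  · subst h; simp
  · simp [h]

lemma finner_le_opNorm_mul_nucNorm (E B : Matrix (Fin m) (Fin n) ℝ) :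
    finner E B ≤ opNorm E * nucNorm B := by
  have hH := Matrix.posSemidef_conjTranspose_mul_self B
  set v := evec hH.1 with hv
  rw [finner_eq_sum_dot E B v (evec_complete hH.1), nucNorm_eq_sum, Finset.mul_sum]
  refine Finset.sum_le_sum fun i _ => ?_
  have h2 : enorm (B *ᵥ v i) = Real.sqrt (hH.1.eigenvalues i) := by
    rw [enorm_eq]
    congr 1
    simpa using dot_mulVec_evec B i i
  have hvnorm : enorm (v i) = 1 := by
    rw [enorm_eq]
    simp [hv, evec_dot hH.1 i i]
  calc (E *ᵥ v i) ⬝ᵥ (B *ᵥ v i) ≤ enorm (E *ᵥ v i) * enorm (B *ᵥ v i) := dot_le_enorm _ _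
    _ ≤ (opNorm E * enorm (v i)) * enorm (B *ᵥ v i) := by
        exact mul_le_mul_of_nonneg_right (enorm_mulVec_le E (v i)) (enorm_nonneg _)
    _ = opNorm E * Real.sqrt (hH.1.eigenvalues i) := by rw [hvnorm, h2]; ring

lemma trace_eq_sum_eigenvalues {H : Matrix (Fin k) (Fin k) ℝ} (hH : H.IsHermitian) :
    H.trace = ∑ i, hH.eigenvalues i := by
  conv_lhs => rw [hH.spectral_theorem, Unitary.conjStarAlgAut_apply]
  rw [Matrix.trace_mul_comm, ← mul_assoc,
    (Matrix.mem_unitaryGroup_iff').mp hH.eigenvectorUnitary.2, one_mul,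
    Matrix.trace_diagonal]
  simp

lemma nucNorm_le_sqrt_rank_mul_frobNorm (B : Matrix (Fin m) (Fin n) ℝ) :
    nucNorm B ≤ Real.sqrt (B.rank) * frobNorm B := by
  classical
  have hH := Matrix.posSemidef_conjTranspose_mul_self B
  set μ := hH.1.eigenvalues with hμ
  have hμ0 : ∀ i, 0 ≤ μ i := fun i => hH.eigenvalues_nonneg i
  set S : Finset (Fin n) := Finset.univ.filter (fun i => μ i ≠ 0) with hS
  have hsum : nucNorm B = ∑ i ∈ S, Real.sqrt (μ i) := by
    rw [nucNorm_eq_sum,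
      show (Matrix.posSemidef_conjTranspose_mul_self B).1.eigenvalues = μ from rfl]
    refine (Finset.sum_subset (Finset.filter_subset _ _) fun i _ hin => ?_).symm
    have : μ i = 0 := by simpa [hS] using hin
    simp [this]
  have hcard : (S.card : ℝ) = (B.rank : ℝ) := by
    rw [← Matrix.rank_conjTranspose_mul_self B, hH.1.rank_eq_card_non_zero_eigs]
    norm_cast
    rw [Fintype.card_subtype]
  have hfrob : frobNorm B ^ 2 = ∑ i, μ i := by
    rw [frobNorm_sq, finner_eq_trace, trace_eq_sum_eigenvalues hH.1]
  have hCS : (∑ i ∈ S, Real.sqrt (μ i)) ^ 2 ≤ S.card * ∑ i ∈ S, μ i := by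
    have := sq_sum_le_card_mul_sum_sq (s := S) (f := fun i => Real.sqrt (μ i))
    simpa [Real.sq_sqrt, hμ0] using this
  have hle : (∑ i ∈ S, μ i) ≤ ∑ i, μ i :=
    Finset.sum_le_sum_of_subset_of_nonneg (Finset.filter_subset _ _)
      (fun i _ _ => hμ0 i)
  have hnn : 0 ≤ nucNorm B := nucNorm_nonneg B
  have h2 : nucNorm B ^ 2 ≤ (B.rank : ℝ) * frobNorm B ^ 2 := by
    rw [hsum, hfrob, ← hcard]
    calc (∑ i ∈ S, Real.sqrt (μ i)) ^ 2 ≤ S.card * ∑ i ∈ S, μ i := hCS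
      _ ≤ S.card * ∑ i, μ i := by
          exact mul_le_mul_of_nonneg_left hle (by positivity)
  calc nucNorm B = Real.sqrt (nucNorm B ^ 2) := by rw [Real.sqrt_sq hnn]
    _ ≤ Real.sqrt ((B.rank : ℝ) * frobNorm B ^ 2) := Real.sqrt_le_sqrt h2
    _ = Real.sqrt (B.rank) * frobNorm B := by
        rw [Real.sqrt_mul (by positivity), Real.sqrt_sq (frobNorm_nonneg B)]

end StmtAux

namespace StmtAux

variable {m n k : ℕ}

lemma vecMulVec_mulVec (a : Fin m → ℝ) (b : Fin n → ℝ) (x : Fin n → ℝ) :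
    Matrix.vecMulVec a b *ᵥ x = (b ⬝ᵥ x) • a := by
  ext i
  simp only [Matrix.vecMulVec_apply, Matrix.mulVec, dotProduct,
    Pi.smul_apply, smul_eq_mul, Finset.sum_mul]
  exact Finset.sum_congr rfl fun j _ => by ring

lemma sum_mulVec' {ι : Type*} (s : Finset ι) (f : ι → Matrix (Fin m) (Fin n) ℝ)
    (x : Fin n → ℝ) : (∑ i ∈ s, f i) *ᵥ x = ∑ i ∈ s, (f i *ᵥ x) := by
  ext j
  simp only [Matrix.mulVec, dotProduct, Matrix.sum_apply, Finset.sum_apply,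
    Finset.sum_mul]
  exact Finset.sum_comm

lemma sum_dotProduct' {ι : Type*} (s : Finset ι) (f : ι → (Fin m → ℝ)) (x : Fin m → ℝ) :
    (∑ i ∈ s, f i) ⬝ᵥ x = ∑ i ∈ s, (f i ⬝ᵥ x) := by
  simp only [dotProduct, Finset.sum_apply, Finset.sum_mul]
  exact Finset.sum_comm

lemma dotProduct_sum' {ι : Type*} (s : Finset ι) (f : ι → (Fin m → ℝ)) (x : Fin m → ℝ) :
    x ⬝ᵥ (∑ i ∈ s, f i) = ∑ i ∈ s, (x ⬝ᵥ f i) := by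
  simp only [dotProduct, Finset.sum_apply, Finset.mul_sum]
  exact Finset.sum_comm

lemma parseval {x : Fin k → ℝ} (v : Fin k → (Fin k → ℝ))
    (hcomp : ∑ i, Matrix.vecMulVec (v i) (v i) = (1 : Matrix (Fin k) (Fin k) ℝ)) :
    x ⬝ᵥ x = ∑ i, (v i ⬝ᵥ x) ^ 2 := by
  have h1 : x ⬝ᵥ ((1 : Matrix (Fin k) (Fin k) ℝ) *ᵥ x) = x ⬝ᵥ x := by simp
  rw [← h1, ← hcomp, sum_mulVec', dotProduct_sum']
  congr 1; ext i
  rw [vecMulVec_mulVec, dotProduct_smul, smul_eq_mul, dotProduct_comm, sq]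

lemma exists_dual (B : Matrix (Fin m) (Fin n) ℝ) :
    ∃ A : Matrix (Fin m) (Fin n) ℝ, opNorm A ≤ 1 ∧ finner A B = nucNorm B := by
  classical
  have hH := Matrix.posSemidef_conjTranspose_mul_self B
  set μ := hH.1.eigenvalues with hμdef
  have hμ0 : ∀ i, 0 ≤ μ i := fun i => hH.eigenvalues_nonneg i
  set v := evec hH.1 with hv
  set c : Fin n → ℝ := fun i => if μ i = 0 then 0 else (Real.sqrt (μ i))⁻¹ with hc
  set A := ∑ i, c i • Matrix.vecMulVec (B *ᵥ v i) (v i) with hA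
  have hAx : ∀ x : Fin n → ℝ, A *ᵥ x = ∑ i, (c i * (v i ⬝ᵥ x)) • (B *ᵥ v i) := by
    intro x
    rw [hA, sum_mulVec']
    congr 1; ext i
    rw [Matrix.smul_mulVec, vecMulVec_mulVec, smul_smul, mul_comm]
  have hBdot : ∀ i j, (B *ᵥ v i) ⬝ᵥ (B *ᵥ v j) = if i = j then μ i else 0 :=
    fun i j => dot_mulVec_evec B i j
  refine ⟨A, ?_, ?_⟩
  · refine opNorm_le A 1 zero_le_one fun x => ?_
    have hsq : enorm (A *ᵥ x) ^ 2 ≤ enorm x ^ 2 := by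
      rw [enorm_sq, enorm_sq, hAx, parseval v (evec_complete hH.1),
        sum_dotProduct']
      refine Finset.sum_le_sum fun i _ => ?_
      rw [smul_dotProduct, smul_eq_mul, dotProduct_sum']
      have : ∀ j, (B *ᵥ v i) ⬝ᵥ ((c j * (v j ⬝ᵥ x)) • (B *ᵥ v j)) =
          if i = j then (c i * (v i ⬝ᵥ x)) * μ i else 0 := by
        intro j
        rw [dotProduct_smul, smul_eq_mul, hBdot i j]
        by_cases h : i = j
        · subst h; simp [mul_comm]
        · simp [h, (show ¬ (i = j) from h)]
      rw [Finset.sum_congr rfl fun j _ => this j, Finset.sum_ite_eq Finset.univ i,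
        if_pos (Finset.mem_univ i)]
      by_cases h : μ i = 0
      · simp [hc, h]
        all_goals positivity
      · have hμpos : 0 < μ i := lt_of_le_of_ne (hμ0 i) (Ne.symm h)
        have hcc : c i * c i * μ i = 1 := by
          rw [hc]
          simp only [if_neg h]
          rw [← mul_inv, Real.mul_self_sqrt (hμ0 i)]
          exact inv_mul_cancel₀ h
        nlinarith [sq_nonneg (v i ⬝ᵥ x)]
    have h5 := Real.sqrt_le_sqrt hsq
    rw [Real.sqrt_sq (enorm_nonneg _), Real.sqrt_sq (enorm_nonneg _)] at h5
    linarith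
  · rw [finner_eq_sum_dot A B v (evec_complete hH.1), nucNorm_eq_sum,
      show (Matrix.posSemidef_conjTranspose_mul_self B).1.eigenvalues = μ from rfl]
    congr 1; ext i
    rw [hAx, sum_dotProduct']
    have : ∀ j, ((c j * (v j ⬝ᵥ v i)) • (B *ᵥ v j)) ⬝ᵥ (B *ᵥ v i) =
        if j = i then c i * μ i else 0 := by
      intro j
      rw [smul_dotProduct, smul_eq_mul, hBdot j i, evec_dot]
      by_cases h : j = i
      · subst h; simp
      · simp [h]
    rw [Finset.sum_congr rfl fun j _ => this j, Finset.sum_ite_eq' Finset.univ i,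
      if_pos (Finset.mem_univ i)]
    by_cases h : μ i = 0
    · simp [hc, h]
    · have hμpos : 0 < μ i := lt_of_le_of_ne (hμ0 i) (Ne.symm h)
      have hsne : Real.sqrt (μ i) ≠ 0 := by positivity
      rw [hc]
      simp only [if_neg h]
      rw [inv_mul_eq_div, div_eq_iff hsne, Real.mul_self_sqrt (hμ0 i)]

lemma nucNorm_triangle (X Y : Matrix (Fin m) (Fin n) ℝ) :
    nucNorm (X + Y) ≤ nucNorm X + nucNorm Y := by
  obtain ⟨A, hA1, hA2⟩ := exists_dual (X + Y)
  have hAnn : 0 ≤ opNorm A := opNorm_nonneg A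
  calc nucNorm (X + Y) = finner A X + finner A Y := by rw [← hA2, finner_add_right]
    _ ≤ opNorm A * nucNorm X + opNorm A * nucNorm Y :=
        add_le_add (finner_le_opNorm_mul_nucNorm A X) (finner_le_opNorm_mul_nucNorm A Y)
    _ ≤ 1 * nucNorm X + 1 * nucNorm Y := by
        exact add_le_add (mul_le_mul_of_nonneg_right hA1 (nucNorm_nonneg X))
          (mul_le_mul_of_nonneg_right hA1 (nucNorm_nonneg Y))
    _ = nucNorm X + nucNorm Y := by ring

end StmtAux

namespace StmtAux

variable {m n k : ℕ}

lemma sqrt_add_of_mul_eq_zero {S T : Matrix (Fin k) (Fin k) ℝ} (hS : S.PosSemidef)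
    (hT : T.PosSemidef) (h : S * T = 0) (hST : (S + T).PosSemidef) :
    hST.sqrt = hS.sqrt + hT.sqrt := by
  have hTS : T * S = 0 := by
    have := congrArg Matrix.conjTranspose h
    rwa [Matrix.conjTranspose_mul, hS.1, hT.1, Matrix.conjTranspose_zero] at this
  have hSsym : hS.sqrtᴴ = hS.sqrt := hS.posSemidef_sqrt.1
  have hTsym : hT.sqrtᴴ = hT.sqrt := hT.posSemidef_sqrt.1
  have h1 : hS.sqrt * T = 0 := by
    rw [← Matrix.conjTranspose_mul_self_eq_zero]
    calc (hS.sqrt * T)ᴴ * (hS.sqrt * T) = Tᴴ * (hS.sqrtᴴ * hS.sqrt) * T := by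
          rw [Matrix.conjTranspose_mul]; simp only [Matrix.mul_assoc]
      _ = T * (S * T) := by rw [hSsym, hS.sqrt_mul_self, hT.1, Matrix.mul_assoc]
      _ = 0 := by rw [h, mul_zero]
  have h2 : hS.sqrt * hT.sqrt = 0 := by
    rw [← Matrix.self_mul_conjTranspose_eq_zero]
    calc (hS.sqrt * hT.sqrt) * (hS.sqrt * hT.sqrt)ᴴ
        = hS.sqrt * (hT.sqrt * hT.sqrtᴴ) * hS.sqrtᴴ := by
          rw [Matrix.conjTranspose_mul]; simp only [Matrix.mul_assoc]
      _ = (hS.sqrt * T) * hS.sqrt := by rw [hTsym, hT.sqrt_mul_self, hSsym]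
      _ = 0 := by rw [h1, zero_mul]
  have h3 : hT.sqrt * hS.sqrt = 0 := by
    have := congrArg Matrix.conjTranspose h2
    rwa [Matrix.conjTranspose_mul, hSsym, hTsym, Matrix.conjTranspose_zero] at this
  refine ((hS.posSemidef_sqrt.add hT.posSemidef_sqrt).eq_sqrt_of_sq_eq hST ?_).symm
  rw [pow_two, Matrix.add_mul, Matrix.mul_add, Matrix.mul_add, h2, h3,
    hS.sqrt_mul_self, hT.sqrt_mul_self]
  abel

lemma nucNorm_add_of_orth {M D : Matrix (Fin m) (Fin n) ℝ}
    (h1 : Mᴴ * D = 0) (h2 : Dᴴ * M = 0) (h3 : (Mᴴ * M) * (Dᴴ * D) = 0) :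
    nucNorm (M + D) = nucNorm M + nucNorm D := by
  have hS := Matrix.posSemidef_conjTranspose_mul_self M
  have hT := Matrix.posSemidef_conjTranspose_mul_self D
  have he : (M + D)ᴴ * (M + D) = Mᴴ * M + Dᴴ * D := by
    rw [Matrix.conjTranspose_add, Matrix.add_mul, Matrix.mul_add, Matrix.mul_add, h1, h2]
    abel
  rw [nucNorm_eq_sqrt, nucNorm_eq_sqrt, nucNorm_eq_sqrt]
  rw [sqrt_congr he _ (hS.add hT), sqrt_add_of_mul_eq_zero hS hT h3 (hS.add hT),
    Matrix.trace_add]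

end StmtAux

namespace StmtAux

variable {m n k : ℕ}

lemma vecMulVec_mul_vecMulVec (a : Fin m → ℝ) (b c : Fin k → ℝ) (d : Fin n → ℝ) :
    Matrix.vecMulVec a b * Matrix.vecMulVec c d = (b ⬝ᵥ c) • Matrix.vecMulVec a d := by
  ext i j
  simp only [Matrix.mul_apply, Matrix.vecMulVec_apply, Matrix.smul_apply,
    dotProduct, smul_eq_mul, Finset.sum_mul]
  exact Finset.sum_congr rfl fun l _ => by ring

lemma vecMulVec_conjTranspose (a : Fin m → ℝ) (b : Fin n → ℝ) :
    (Matrix.vecMulVec a b)ᴴ = Matrix.vecMulVec b a := by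
  ext i j; simp [Matrix.conjTranspose_apply, Matrix.vecMulVec_apply, mul_comm]

lemma exists_proj_left (M : Matrix (Fin m) (Fin n) ℝ) :
    ∃ P : Matrix (Fin m) (Fin m) ℝ,
      Pᴴ = P ∧ P * P = P ∧ P * M = M ∧ P.rank ≤ M.rank := by
  classical
  have hH := Matrix.posSemidef_self_mul_conjTranspose M
  set μ := hH.1.eigenvalues with hμdef
  set v := evec hH.1 with hv
  set e : Fin m → ℝ := fun i => if μ i = 0 then 0 else 1 with he
  set P := ∑ i, e i • Matrix.vecMulVec (v i) (v i) with hP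
  have hsym : Pᴴ = P := by
    rw [hP, Matrix.conjTranspose_sum]
    exact Finset.sum_congr rfl fun i _ => by
      rw [Matrix.conjTranspose_smul, vecMulVec_conjTranspose]; norm_num
  have hmul : ∀ (f g : Fin m → ℝ),
      (∑ i, f i • Matrix.vecMulVec (v i) (v i)) * (∑ i, g i • Matrix.vecMulVec (v i) (v i))
      = ∑ i, (f i * g i) • Matrix.vecMulVec (v i) (v i) := by
    intro f g
    rw [Finset.sum_mul]
    refine Finset.sum_congr rfl fun i _ => ?_
    rw [Finset.mul_sum]
    have : ∀ j, (f i • Matrix.vecMulVec (v i) (v i)) * (g j • Matrix.vecMulVec (v j) (v j))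
        = if j = i then (f i * g i) • Matrix.vecMulVec (v i) (v i) else 0 := by
      intro j
      rw [Matrix.smul_mul, Matrix.mul_smul, vecMulVec_mul_vecMulVec, evec_dot]
      by_cases hij : i = j
      · subst hij; simp [smul_smul]
      · simp [hij, Ne.symm hij]
    rw [Finset.sum_congr rfl fun j _ => this j, Finset.sum_ite_eq' Finset.univ i,
      if_pos (Finset.mem_univ i)]
  have hidem : P * P = P := by
    rw [hP, hmul]
    refine Finset.sum_congr rfl fun i _ => ?_
    rw [he]
    by_cases h : μ i = 0 <;> simp [h]
  have hfold : hH.1.eigenvalues = μ := rfl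
  have hPH : P * (M * Mᴴ) = M * Mᴴ := by
    conv_lhs => rw [hP, spectral_sum hH.1]
    conv_rhs => rw [spectral_sum hH.1]
    rw [hmul, hfold]
    refine Finset.sum_congr rfl fun i _ => ?_
    rw [he]
    by_cases h : μ i = 0
    · simp [h, hv]
    · simp [h, hv]
  have hPM : P * M = M := by
    have hzero : ((1 - P) * M) * ((1 - P) * M)ᴴ = 0 := by
      rw [Matrix.conjTranspose_mul, Matrix.conjTranspose_sub, hsym,
        Matrix.conjTranspose_one]
      calc (1 - P) * M * (Mᴴ * (1 - P)) = ((1 - P) * (M * Mᴴ)) * (1 - P) := by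
            simp only [Matrix.mul_assoc]
        _ = 0 := by
            rw [Matrix.sub_mul, Matrix.one_mul, hPH, sub_self, Matrix.zero_mul]
    have := Matrix.self_mul_conjTranspose_eq_zero.mp hzero
    rw [Matrix.sub_mul, Matrix.one_mul, sub_eq_zero] at this
    exact this.symm
  have hrank : P.rank ≤ M.rank := by
    set c : Fin m → ℝ := fun i => if μ i = 0 then 0 else (μ i)⁻¹ with hcdef
    have hCH : (∑ i, c i • Matrix.vecMulVec (v i) (v i)) * (M * Mᴴ) = P := by
      conv_lhs => rw [spectral_sum hH.1]
      rw [hmul, hfold, hP]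
      refine Finset.sum_congr rfl fun i _ => ?_
      rw [hcdef, he]
      by_cases h : μ i = 0
      · simp [h, hv]
      · simp [h, hv, inv_mul_cancel₀ h]
    calc P.rank = ((∑ i, c i • Matrix.vecMulVec (v i) (v i)) * (M * Mᴴ)).rank := by
          rw [hCH]
      _ ≤ (M * Mᴴ).rank := Matrix.rank_mul_le_right _ _
      _ = M.rank := Matrix.rank_self_mul_conjTranspose M
  exact ⟨P, hsym, hidem, hPM, hrank⟩

lemma rank_add_le' (A B : Matrix (Fin m) (Fin n) ℝ) :
    (A + B).rank ≤ A.rank + B.rank := by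
  unfold Matrix.rank
  rw [Matrix.mulVecLin_add]
  have hle : LinearMap.range (A.mulVecLin + B.mulVecLin) ≤
      LinearMap.range A.mulVecLin ⊔ LinearMap.range B.mulVecLin := by
    rintro x ⟨y, rfl⟩
    exact Submodule.add_mem_sup ⟨y, rfl⟩ ⟨y, rfl⟩
  calc Module.finrank ℝ (LinearMap.range (A.mulVecLin + B.mulVecLin))
      ≤ Module.finrank ℝ ↥(LinearMap.range A.mulVecLin ⊔ LinearMap.range B.mulVecLin) :=
        Submodule.finrank_mono hle
    _ ≤ Module.finrank ℝ (LinearMap.range A.mulVecLin) +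
        Module.finrank ℝ (LinearMap.range B.mulVecLin) :=
        Submodule.finrank_add_le_finrank_add_finrank _ _

end StmtAux

namespace StmtAux

variable {m n k : ℕ}

lemma finner_neg_right (A B : Matrix (Fin m) (Fin n) ℝ) :
    finner A (-B) = - finner A B := by
  have := finner_smul_right (-1 : ℝ) A B
  simpa using this

lemma finner_sub_right (A B C : Matrix (Fin m) (Fin n) ℝ) :
    finner A (B - C) = finner A B - finner A C := by
  rw [sub_eq_add_neg, finner_add_right, finner_neg_right, sub_eq_add_neg]

lemma finner_sub_left (A B C : Matrix (Fin m) (Fin n) ℝ) :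
    finner (A - B) C = finner A C - finner B C := by
  rw [finner_comm, finner_sub_right, finner_comm C A, finner_comm C B]

lemma finner_smul_left (c : ℝ) (A B : Matrix (Fin m) (Fin n) ℝ) :
    finner (c • A) B = c * finner A B := by
  rw [finner_comm, finner_smul_right, finner_comm]

lemma frobNorm_le_of_finner_le {A B : Matrix (Fin m) (Fin n) ℝ}
    (h : finner A A ≤ finner B B) : frobNorm A ≤ frobNorm B := by
  rw [frobNorm_eq, frobNorm_eq]
  exact Real.sqrt_le_sqrt h

end StmtAux

namespace StmtAux

lemma finner_expand {m n : ℕ} (E D : Matrix (Fin m) (Fin n) ℝ) (c : ℝ) :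
    finner (E - c • D) (E - c • D) =
      finner E E - 2 * (c * finner E D) + c ^ 2 * finner D D := by
  rw [finner_sub_left, finner_sub_right, finner_sub_right, finner_smul_left,
    finner_smul_right, finner_smul_left, finner_smul_right, finner_comm D E]
  ring

end StmtAux


set_option maxHeartbeats 1000000
open StmtAux

theorem stmt4 {m n r : ℕ} (p lam : ℝ) (hp : 0 < p) (hlam : 0 < lam)
    (M : Matrix (Fin m) (Fin n) ℝ) (hM : ∀ i j, 0 ≤ M i j) (hrank : M.rank ≤ r)
    (Y : Matrix (Fin m) (Fin n) ℝ) (hY : opNorm (Y - p • M) ≤ lam / (2 * p))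
    (Mhat : Matrix (Fin m) (Fin n) ℝ) (hMhat_pos : ∀ i j, 0 ≤ Mhat i j)
    (hMhat_min : ∀ M' : Matrix (Fin m) (Fin n) ℝ, (∀ i j, 0 ≤ M' i j) →
      frobNorm (Y - p • Mhat)^2 + lam * nucNorm Mhat ≤
        frobNorm (Y - p • M')^2 + lam * nucNorm M') :
    frobNorm (Mhat - M) ≤ 2 * Real.sqrt (2 * r) * lam / p^2 := by
  classical
  obtain ⟨E, hE⟩ : ∃ X, X = Y - p • M := ⟨_, rfl⟩
  obtain ⟨Δ, hΔ⟩ : ∃ X, X = Mhat - M := ⟨_, rfl⟩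
  rw [← hE] at hY
  rw [← hΔ]
  -- basic inequality
  have h0 := hMhat_min M hM
  have hYhat : Y - p • Mhat = E - p • Δ := by
    rw [hE, hΔ, smul_sub]; abel
  have hexp : frobNorm (Y - p • Mhat) ^ 2 =
      frobNorm E ^ 2 - 2 * (p * finner E Δ) + p ^ 2 * frobNorm Δ ^ 2 := by
    rw [hYhat, frobNorm_sq, finner_expand, ← frobNorm_sq, ← frobNorm_sq]
  have hbasic : p ^ 2 * frobNorm Δ ^ 2 ≤
      2 * (p * finner E Δ) + lam * (nucNorm M - nucNorm Mhat) := by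
    rw [hexp, ← hE] at h0; linarith [h0]
  -- projections
  obtain ⟨P, hPsym, hPidem, hPM, hPrank⟩ := exists_proj_left M
  obtain ⟨Q, hQsym, hQidem, hQM, hQrank⟩ := exists_proj_left Mᴴ
  have hMQ : M * Q = M := by
    have := congrArg Matrix.conjTranspose hQM
    rwa [Matrix.conjTranspose_mul, Matrix.conjTranspose_conjTranspose, hQsym] at this
  have hQrank' : Q.rank ≤ M.rank := by rwa [Matrix.rank_conjTranspose M] at hQrank
  have hPMzero : (1 - P) * M = 0 := by
    rw [Matrix.sub_mul, Matrix.one_mul, hPM, sub_self]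
  have hMQzero : M * (1 - Q) = 0 := by
    rw [Matrix.mul_sub, Matrix.mul_one, hMQ, sub_self]
  have hPsub : (1 - P)ᴴ = 1 - P := by
    rw [Matrix.conjTranspose_sub, hPsym, Matrix.conjTranspose_one]
  have hQsub : (1 - Q)ᴴ = 1 - Q := by
    rw [Matrix.conjTranspose_sub, hQsym, Matrix.conjTranspose_one]
  have hPsubidem : (1 - P) * (1 - P) = 1 - P := by
    rw [Matrix.sub_mul, Matrix.one_mul, Matrix.mul_sub, Matrix.mul_one, hPidem]; abel
  have hQsubidem : (1 - Q) * (1 - Q) = 1 - Q := by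
    rw [Matrix.sub_mul, Matrix.one_mul, Matrix.mul_sub, Matrix.mul_one, hQidem]; abel
  obtain ⟨D, hD⟩ : ∃ X, X = (1 - P) * Δ * (1 - Q) := ⟨_, rfl⟩
  obtain ⟨Δ1, hΔ1⟩ : ∃ X, X = Δ - D := ⟨_, rfl⟩
  have hDct : Dᴴ = (1 - Q) * Δᴴ * (1 - P) := by
    rw [hD, Matrix.conjTranspose_mul, Matrix.conjTranspose_mul, hPsub, hQsub,
      Matrix.mul_assoc]
  -- orthogonality conditions
  have horth1 : Mᴴ * D = 0 := by
    have hMP : Mᴴ * (1 - P) = 0 := by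
      have := congrArg Matrix.conjTranspose hPMzero
      rwa [Matrix.conjTranspose_mul, hPsub, Matrix.conjTranspose_zero] at this
    rw [hD, ← Matrix.mul_assoc, ← Matrix.mul_assoc, hMP, Matrix.zero_mul, Matrix.zero_mul]
  have horth2 : Dᴴ * M = 0 := by
    rw [hDct, Matrix.mul_assoc, hPMzero, Matrix.mul_zero]
  have horth3 : (Mᴴ * M) * (Dᴴ * D) = 0 := by
    have hMMQ : (Mᴴ * M) * (1 - Q) = 0 := by
      rw [Matrix.mul_assoc, hMQzero, Matrix.mul_zero]
    rw [hDct, hD]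
    calc (Mᴴ * M) * ((1 - Q) * Δᴴ * (1 - P) * ((1 - P) * Δ * (1 - Q)))
        = ((Mᴴ * M) * (1 - Q)) * (Δᴴ * (1 - P) * ((1 - P) * Δ * (1 - Q))) := by
          simp only [Matrix.mul_assoc]
      _ = 0 := by rw [hMMQ, Matrix.zero_mul]
  have hadd : nucNorm (M + D) = nucNorm M + nucNorm D :=
    nucNorm_add_of_orth horth1 horth2 horth3
  -- rank bound on Δ1
  have hΔ1eq : Δ1 = P * Δ + (1 - P) * Δ * Q := by
    have e1 : (1 - P) * Δ * (1 - Q) = Δ - Δ * Q - P * Δ + P * Δ * Q := by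
      rw [Matrix.sub_mul, Matrix.one_mul, Matrix.sub_mul, Matrix.mul_sub, Matrix.mul_sub,
        Matrix.mul_one, Matrix.mul_one]
      abel
    have e2 : (1 - P) * Δ * Q = Δ * Q - P * Δ * Q := by
      rw [Matrix.sub_mul, Matrix.one_mul, Matrix.sub_mul]
    rw [hΔ1, hD, e1, e2]; abel
  have hrankΔ1 : (Δ1.rank : ℝ) ≤ 2 * r := by
    have h1 : Δ1.rank ≤ (P * Δ).rank + ((1 - P) * Δ * Q).rank := by
      rw [hΔ1eq]; exact rank_add_le' _ _
    have h2 : (P * Δ).rank ≤ r :=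
      le_trans (le_trans (Matrix.rank_mul_le_left _ _) hPrank) hrank
    have h3 : ((1 - P) * Δ * Q).rank ≤ r :=
      le_trans (le_trans (Matrix.rank_mul_le_right _ _) hQrank') hrank
    have h4 : Δ1.rank ≤ r + r := le_trans h1 (add_le_add h2 h3)
    calc (Δ1.rank : ℝ) ≤ (r : ℝ) + r := by exact_mod_cast h4
      _ = 2 * r := by ring
  -- Frobenius orthogonality
  have hDQ : D * (1 - Q) = D := by
    rw [hD, Matrix.mul_assoc ((1 - P) * Δ), hQsubidem]
  have hkey2 : Dᴴ * D = (1 - Q) * (Δᴴ * D) := by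
    rw [hDct]
    calc (1 - Q) * Δᴴ * (1 - P) * D
        = (1 - Q) * (Δᴴ * (((1 - P) * (1 - P)) * (Δ * (1 - Q)))) := by
          rw [hD]; simp only [Matrix.mul_assoc]
      _ = (1 - Q) * (Δᴴ * D) := by rw [hPsubidem, hD]; simp only [Matrix.mul_assoc]
  have hDD : finner D D = finner Δ D := by
    rw [finner_eq_trace, finner_eq_trace, hkey2, Matrix.trace_mul_comm,
      Matrix.mul_assoc, hDQ]
  have hfrobΔ1 : frobNorm Δ1 ≤ frobNorm Δ := by
    refine frobNorm_le_of_finner_le ?_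
    have hDDnn : 0 ≤ finner D D := finner_self_nonneg D
    rw [hΔ1, finner_sub_left, finner_sub_right, finner_sub_right, finner_comm D Δ]
    linarith
  -- nuclear-norm inequalities
  have htri1 : nucNorm Δ ≤ nucNorm Δ1 + nucNorm D := by
    have hΔsplit : Δ = Δ1 + D := by rw [hΔ1]; abel
    calc nucNorm Δ = nucNorm (Δ1 + D) := by rw [← hΔsplit]
      _ ≤ nucNorm Δ1 + nucNorm D := nucNorm_triangle _ _
  have htri2 : nucNorm M - nucNorm Mhat ≤ nucNorm Δ1 - nucNorm D := by
    have hMD : M + D = Mhat + (-Δ1) := by rw [hΔ1, hΔ]; abel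
    have h5 : nucNorm (M + D) ≤ nucNorm Mhat + nucNorm Δ1 := by
      rw [hMD]
      calc nucNorm (Mhat + -Δ1) ≤ nucNorm Mhat + nucNorm (-Δ1) := nucNorm_triangle _ _
        _ = nucNorm Mhat + nucNorm Δ1 := by rw [nucNorm_neg]
    rw [hadd] at h5
    linarith
  -- dual bound on the inner product
  have hEineq : finner E Δ ≤ lam / (2 * p) * nucNorm Δ :=
    le_trans (finner_le_opNorm_mul_nucNorm E Δ)
      (mul_le_mul_of_nonneg_right hY (nucNorm_nonneg Δ))
  have h2p : 2 * (p * finner E Δ) ≤ lam * nucNorm Δ := by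
    have h6 := mul_le_mul_of_nonneg_left hEineq (le_of_lt (mul_pos two_pos hp))
    calc 2 * (p * finner E Δ) = (2 * p) * finner E Δ := by ring
      _ ≤ (2 * p) * (lam / (2 * p) * nucNorm Δ) := h6
      _ = lam * nucNorm Δ := by field_simp
  -- rank bound on nuclear norm of Δ1
  have hnucΔ1 : nucNorm Δ1 ≤ Real.sqrt (2 * r) * frobNorm Δ := by
    calc nucNorm Δ1 ≤ Real.sqrt (Δ1.rank) * frobNorm Δ1 :=
        nucNorm_le_sqrt_rank_mul_frobNorm Δ1
      _ ≤ Real.sqrt (2 * r) * frobNorm Δ :=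
        mul_le_mul (Real.sqrt_le_sqrt hrankΔ1) hfrobΔ1 (frobNorm_nonneg _)
          (Real.sqrt_nonneg _)
  -- key inequality
  have hsnn : (0:ℝ) ≤ Real.sqrt (2 * r) := Real.sqrt_nonneg _
  have hfnn : 0 ≤ frobNorm Δ := frobNorm_nonneg _
  have hppos : (0:ℝ) < p ^ 2 := by positivity
  have hkey : p ^ 2 * frobNorm Δ ^ 2 ≤
      2 * lam * (Real.sqrt (2 * r) * frobNorm Δ) := by
    have hl1 := mul_le_mul_of_nonneg_left htri1 hlam.le
    rw [mul_add] at hl1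
    have hl2 := mul_le_mul_of_nonneg_left htri2 hlam.le
    rw [mul_sub] at hl2
    rw [mul_sub] at hbasic
    have hl3 := mul_le_mul_of_nonneg_left hnucΔ1 (by positivity : (0:ℝ) ≤ 2 * lam)
    nlinarith [hbasic, h2p, hl1, hl2, hl3]
  -- conclude
  rcases eq_or_lt_of_le hfnn with hf0 | hfpos
  · rw [← hf0]
    positivity
  · have h1 : p ^ 2 * frobNorm Δ ≤ 2 * lam * Real.sqrt (2 * r) := by
      refine le_of_mul_le_mul_right ?_ hfpos
      calc p ^ 2 * frobNorm Δ * frobNorm Δ = p ^ 2 * frobNorm Δ ^ 2 := by ring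
        _ ≤ 2 * lam * (Real.sqrt (2 * r) * frobNorm Δ) := hkey
        _ = 2 * lam * Real.sqrt (2 * r) * frobNorm Δ := by ring
    rw [show 2 * Real.sqrt (2 * r) * lam / p ^ 2 =
      (2 * lam * Real.sqrt (2 * r)) / p ^ 2 by ring, le_div_iff₀ hppos]
    linarith
end

section
/- (Deterministic recovery bound for rank-constrained least squares.) Let p > 0, let M be an entrywise-nonnegative m×n real matrix of rank at most r, and let Y be any m×n real matrix. If M̂ minimizes ‖Y − pM'‖_F over all entrywise-nonnegative m×n matrices M' with rank(M') ≤ r, then ‖M̂ − M‖_F ≤ (2√(2r)/p)·‖Y − pM‖. -/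
open MeasureTheory ProbabilityTheory Real Matrix

lemma opNorm_transpose {m n : ℕ} (A : Matrix (Fin m) (Fin n) ℝ) : opNorm Aᵀ = opNorm A := by
  have h : Aᵀ = Aᴴ := by ext i j; simp [Matrix.conjTranspose_apply]
  rw [opNorm, opNorm, h, Matrix.toEuclideanLin_conjTranspose_eq_adjoint,
    LinearMap.adjoint_toContinuousLinearMap]
  exact ContinuousLinearMap.adjoint.norm_map _

lemma norm_toEuclideanLin_le {m n : ℕ} (A : Matrix (Fin m) (Fin n) ℝ)
    (x : EuclideanSpace ℝ (Fin n)) :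
    ‖Matrix.toEuclideanLin A x‖ ≤ opNorm A * ‖x‖ := by
  exact (LinearMap.toContinuousLinearMap (Matrix.toEuclideanLin A)).le_opNorm x

set_option maxHeartbeats 1000000 in
/-- Key inequality: the Frobenius inner product of `E` with a matrix `D` whose columns lie
in a subspace of dimension `k` is at most `√k ⬝ ‖E‖_op ⬝ ‖D‖_F`. -/
lemma inner_le_key {m n : ℕ} (E D : Matrix (Fin m) (Fin n) ℝ)
    (W : Submodule ℝ (EuclideanSpace ℝ (Fin m)))
    (hmem : ∀ j, ((WithLp.linearEquiv 2 ℝ (Fin m → ℝ)).symm (Dᵀ j)) ∈ W) :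
    ∑ i, ∑ j, E i j * D i j ≤
      Real.sqrt (Module.finrank ℝ W) * opNorm E * Real.sqrt (∑ i, ∑ j, (D i j)^2) := by
  classical
  set k := Module.finrank ℝ W with hk
  set u := stdOrthonormalBasis ℝ W with hu
  set d : Fin n → W := fun j => ⟨(WithLp.linearEquiv 2 ℝ (Fin m → ℝ)).symm (Dᵀ j), hmem j⟩
    with hd
  set c : Fin k → Fin n → ℝ := fun i j => u.repr (d j) i with hc
  set v : Fin k → (Fin m → ℝ) := fun i => WithLp.linearEquiv 2 ℝ (Fin m → ℝ) (u i : _) with hv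
  set b : Fin k → Fin n → ℝ := fun i j => ∑ t, v i t * E t j with hb
  -- decomposition of columns of D
  have hdecomp : ∀ j t, D t j = ∑ i, c i j * v i t := by
    intro j t
    have hsr := u.sum_repr (d j)
    have h1 : (Dᵀ j) = ∑ i, c i j • v i := by
      have h2 : ((∑ i, c i j • u i : W) : EuclideanSpace ℝ (Fin m))
          = (WithLp.linearEquiv 2 ℝ (Fin m → ℝ)).symm (Dᵀ j) := by rw [hsr]
      apply_fun (WithLp.linearEquiv 2 ℝ (Fin m → ℝ)) at h2
      rw [LinearEquiv.apply_symm_apply] at h2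
      rw [← h2]
      push_cast
      rw [map_sum]
      simp [hv]
    have := congrFun h1 t
    simpa [Finset.sum_apply] using this
  -- Parseval for the columns of D
  have hc2 : ∀ j, ∑ i, (c i j)^2 = ∑ t, (D t j)^2 := by
    intro j
    have h1 : ∑ i, (c i j)^2 = ‖u.repr (d j)‖^2 := by
      rw [EuclideanSpace.norm_eq, Real.sq_sqrt (by positivity)]
      refine Finset.sum_congr rfl fun i _ => ?_
      rw [Real.norm_eq_abs, sq_abs]
    have h2 : ‖u.repr (d j)‖ = ‖((d j : W) : EuclideanSpace ℝ (Fin m))‖ := by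
      rw [LinearIsometryEquiv.norm_map]
      exact Submodule.coe_norm (d j)
    have h3 : ‖((d j : W) : EuclideanSpace ℝ (Fin m))‖^2 = ∑ t, (D t j)^2 := by
      rw [EuclideanSpace.norm_eq, Real.sq_sqrt (by positivity)]
      refine Finset.sum_congr rfl fun t _ => ?_
      rw [Real.norm_eq_abs, sq_abs]
      rfl
    rw [h1, h2, h3]
  -- operator norm bound for rows of UᵀE
  have hb2 : ∀ i, ∑ j, (b i j)^2 ≤ (opNorm E)^2 := by
    intro i
    have hnorm1 : ‖(u i : EuclideanSpace ℝ (Fin m))‖ = 1 := by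
      rw [Submodule.norm_coe]
      exact u.orthonormal.1 i
    have hle := norm_toEuclideanLin_le Eᵀ (u i : EuclideanSpace ℝ (Fin m))
    rw [hnorm1, mul_one, opNorm_transpose] at hle
    have heq : ∑ j, (b i j)^2 = ‖Matrix.toEuclideanLin Eᵀ (u i : EuclideanSpace ℝ (Fin m))‖^2 := by
      rw [EuclideanSpace.norm_eq, Real.sq_sqrt (by positivity)]
      refine Finset.sum_congr rfl fun j _ => ?_
      rw [Real.norm_eq_abs, sq_abs]
      congr 1
      show b i j = (Eᵀ *ᵥ (WithLp.equiv 2 (Fin m → ℝ)) (u i : EuclideanSpace ℝ (Fin m))) j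
      simp [hb, hv, Matrix.mulVec, dotProduct, Matrix.transpose_apply, mul_comm]
    rw [heq]
    exact pow_le_pow_left₀ (norm_nonneg _) hle 2
  -- rewrite the inner product
  have hip : ∑ i, ∑ j, E i j * D i j = ∑ q : Fin k × Fin n, c q.1 q.2 * b q.1 q.2 := by
    have hcol : ∀ j, ∑ t, E t j * D t j = ∑ i, c i j * b i j := by
      intro j
      calc ∑ t, E t j * D t j = ∑ t, E t j * ∑ i, c i j * v i t := by
            refine Finset.sum_congr rfl fun t _ => by rw [hdecomp j t]
        _ = ∑ t, ∑ i, c i j * (v i t * E t j) := by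
            refine Finset.sum_congr rfl fun t _ => ?_
            rw [Finset.mul_sum]
            refine Finset.sum_congr rfl fun i _ => by ring
        _ = ∑ i, ∑ t, c i j * (v i t * E t j) := by rw [Finset.sum_comm]
        _ = ∑ i, c i j * b i j := by
            refine Finset.sum_congr rfl fun i _ => ?_
            rw [hb, ← Finset.mul_sum]
    calc ∑ i, ∑ j, E i j * D i j = ∑ j, ∑ t, E t j * D t j := by rw [Finset.sum_comm]
      _ = ∑ j, ∑ i, c i j * b i j := Finset.sum_congr rfl fun j _ => hcol j
      _ = ∑ i, ∑ j, c i j * b i j := by rw [Finset.sum_comm]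
      _ = ∑ q : Fin k × Fin n, c q.1 q.2 * b q.1 q.2 := by rw [Fintype.sum_prod_type]
  -- Cauchy-Schwarz
  have hcs := Finset.sum_mul_sq_le_sq_mul_sq Finset.univ
    (fun q : Fin k × Fin n => c q.1 q.2) (fun q : Fin k × Fin n => b q.1 q.2)
  have hcsum : ∑ q : Fin k × Fin n, (c q.1 q.2)^2 = ∑ i, ∑ j, (D i j)^2 := by
    rw [Fintype.sum_prod_type]
    calc ∑ i : Fin k, ∑ j, (c i j)^2 = ∑ j, ∑ i : Fin k, (c i j)^2 := by rw [Finset.sum_comm]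
      _ = ∑ j, ∑ t, (D t j)^2 := Finset.sum_congr rfl fun j _ => hc2 j
      _ = ∑ i, ∑ j, (D i j)^2 := by rw [Finset.sum_comm]
  have hbsum : ∑ q : Fin k × Fin n, (b q.1 q.2)^2 ≤ k * (opNorm E)^2 := by
    rw [Fintype.sum_prod_type]
    calc ∑ i : Fin k, ∑ j, (b i j)^2 ≤ ∑ _i : Fin k, (opNorm E)^2 :=
          Finset.sum_le_sum fun i _ => hb2 i
      _ = k * (opNorm E)^2 := by simp [mul_comm]
  have hSD0 : (0:ℝ) ≤ ∑ i, ∑ j, (D i j)^2 :=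
    Finset.sum_nonneg fun i _ => Finset.sum_nonneg fun j _ => sq_nonneg _
  rw [hip]
  set S : ℝ := ∑ q : Fin k × Fin n, c q.1 q.2 * b q.1 q.2 with hS
  have h1 : S ≤ Real.sqrt (S^2) := by
    rw [Real.sqrt_sq_eq_abs]; exact le_abs_self S
  have h2 : Real.sqrt (S^2) ≤
      Real.sqrt ((∑ i, ∑ j, (D i j)^2) * (k * (opNorm E)^2)) := by
    apply Real.sqrt_le_sqrt
    calc S^2 ≤ (∑ q : Fin k × Fin n, (c q.1 q.2)^2) * (∑ q : Fin k × Fin n, (b q.1 q.2)^2) := hcs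
      _ ≤ (∑ i, ∑ j, (D i j)^2) * (k * (opNorm E)^2) := by
          rw [hcsum]
          exact mul_le_mul_of_nonneg_left hbsum hSD0
  refine (h1.trans h2).trans (le_of_eq ?_)
  rw [Real.sqrt_mul hSD0, Real.sqrt_mul (by positivity : (0:ℝ) ≤ (k:ℝ)),
    Real.sqrt_sq (show (0:ℝ) ≤ opNorm E from norm_nonneg _)]
  ring

theorem stmt5 {m n r : ℕ} (p : ℝ) (hp : 0 < p)
    (M : Matrix (Fin m) (Fin n) ℝ) (hM : ∀ i j, 0 ≤ M i j) (hrank : M.rank ≤ r)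
    (Y : Matrix (Fin m) (Fin n) ℝ)
    (Mhat : Matrix (Fin m) (Fin n) ℝ) (hMhat_pos : ∀ i j, 0 ≤ Mhat i j)
    (hMhat_rank : Mhat.rank ≤ r)
    (hMhat_min : ∀ M' : Matrix (Fin m) (Fin n) ℝ, (∀ i j, 0 ≤ M' i j) → M'.rank ≤ r →
      frobNorm (Y - p • Mhat) ≤ frobNorm (Y - p • M')) :
    frobNorm (Mhat - M) ≤ 2 * Real.sqrt (2 * r) / p * opNorm (Y - p • M) := by
  classical
  set E := Y - p • M with hE
  set D := Mhat - M with hD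
  set IP : ℝ := ∑ i, ∑ j, E i j * D i j with hIP
  set SD : ℝ := ∑ i, ∑ j, (D i j)^2 with hSD
  have hSD0 : 0 ≤ SD := Finset.sum_nonneg fun i _ => Finset.sum_nonneg fun j _ => sq_nonneg _
  set op : ℝ := opNorm E with hop
  have hop0 : 0 ≤ op := norm_nonneg _
  -- Step 1: p² SD ≤ 2p IP
  have h1 : frobNorm (Y - p • Mhat) ≤ frobNorm (Y - p • M) := hMhat_min M hM hrank
  have hrw : Y - p • Mhat = E - p • D := by
    ext i j
    simp only [hE, hD, Matrix.sub_apply, Matrix.smul_apply, smul_eq_mul]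
    ring
  have h2 : ∑ i, ∑ j, ((E - p • D) i j)^2 ≤ ∑ i, ∑ j, (E i j)^2 := by
    rw [hrw] at h1
    unfold frobNorm at h1
    nlinarith [Real.sq_sqrt (show (0:ℝ) ≤ ∑ i, ∑ j, ((E - p • D) i j)^2 from
        Finset.sum_nonneg fun i _ => Finset.sum_nonneg fun j _ => sq_nonneg _),
      Real.sq_sqrt (show (0:ℝ) ≤ ∑ i, ∑ j, (E i j)^2 from
        Finset.sum_nonneg fun i _ => Finset.sum_nonneg fun j _ => sq_nonneg _),
      Real.sqrt_nonneg (∑ i, ∑ j, ((E - p • D) i j)^2),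
      Real.sqrt_nonneg (∑ i, ∑ j, (E i j)^2)]
  have hexp : ∑ i, ∑ j, ((E - p • D) i j)^2
      = (∑ i, ∑ j, (E i j)^2) - 2*p*IP + p^2*SD := by
    rw [hIP, hSD]
    have hterm : ∀ i j, ((E - p • D) i j)^2
        = (E i j)^2 - 2*p*(E i j * D i j) + p^2*(D i j)^2 := by
      intro i j
      simp only [Matrix.sub_apply, Matrix.smul_apply, smul_eq_mul]
      ring
    simp_rw [hterm]
    simp only [Finset.sum_add_distrib, Finset.sum_sub_distrib, ← Finset.mul_sum]
  have hkey0 : p^2 * SD ≤ 2*p*IP := by nlinarith [hexp, h2]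
  -- Step 2: IP ≤ √(2r) ⬝ op ⬝ √SD
  set le2 := WithLp.linearEquiv 2 ℝ (Fin m → ℝ) with hle2
  set W0 : Submodule ℝ (Fin m → ℝ) :=
    Submodule.span ℝ (Set.range Mhatᵀ) ⊔ Submodule.span ℝ (Set.range Mᵀ) with hW0
  set W : Submodule ℝ (EuclideanSpace ℝ (Fin m)) := W0.map (le2.symm : (Fin m → ℝ) →ₗ[ℝ] EuclideanSpace ℝ (Fin m)) with hW
  have hWrank : Module.finrank ℝ W ≤ 2 * r := by
    have h0 : Module.finrank ℝ W = Module.finrank ℝ W0 :=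
      LinearEquiv.finrank_map_eq le2.symm W0
    have h3 : Module.finrank ℝ W0 ≤ Module.finrank ℝ (Submodule.span ℝ (Set.range Mhatᵀ))
        + Module.finrank ℝ (Submodule.span ℝ (Set.range Mᵀ)) :=
      Submodule.finrank_add_le_finrank_add_finrank _ _
    rw [Matrix.rank_eq_finrank_span_cols] at hMhat_rank hrank
    rw [show Mhat.col = Mhatᵀ from rfl] at hMhat_rank; rw [show M.col = Mᵀ from rfl] at hrank
    omega
  have hmem : ∀ j, le2.symm (Dᵀ j) ∈ W := by
    intro j
    refine Submodule.mem_map_of_mem ?_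
    have h1' : Mhatᵀ j ∈ W0 := Submodule.mem_sup_left (Submodule.subset_span ⟨j, rfl⟩)
    have h2' : Mᵀ j ∈ W0 := Submodule.mem_sup_right (Submodule.subset_span ⟨j, rfl⟩)
    have h3' : Dᵀ j = Mhatᵀ j - Mᵀ j := by
      ext i; simp [hD, Matrix.transpose_apply, Matrix.sub_apply]
    rw [h3']
    exact sub_mem h1' h2'
  have hkey1 : IP ≤ Real.sqrt (Module.finrank ℝ W) * op * Real.sqrt SD :=
    inner_le_key E D W hmem
  have hkey2 : Real.sqrt (Module.finrank ℝ W) ≤ Real.sqrt (2*r) := by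
    apply Real.sqrt_le_sqrt
    exact_mod_cast hWrank
  have hkey : IP ≤ Real.sqrt (2*r) * op * Real.sqrt SD := by
    calc IP ≤ Real.sqrt (Module.finrank ℝ W) * op * Real.sqrt SD := hkey1
      _ ≤ Real.sqrt (2*r) * op * Real.sqrt SD := by
          apply mul_le_mul_of_nonneg_right _ (Real.sqrt_nonneg _)
          exact mul_le_mul_of_nonneg_right hkey2 hop0
  -- Step 3: conclude
  have hgoal : frobNorm D = Real.sqrt SD := rfl
  rw [hgoal]
  set t := Real.sqrt SD with ht
  have ht0 : 0 ≤ t := Real.sqrt_nonneg _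
  have ht2 : t^2 = SD := Real.sq_sqrt hSD0
  have hfinal : p^2 * t^2 ≤ 2*p*(Real.sqrt (2*(r:ℝ)) * op * t) := by
    rw [ht2]
    calc p^2 * SD ≤ 2*p*IP := hkey0
      _ ≤ 2*p*(Real.sqrt (2*(r:ℝ)) * op * t) :=
          mul_le_mul_of_nonneg_left hkey (by positivity)
  rcases eq_or_lt_of_le ht0 with h0 | h0
  · rw [← h0]
    exact mul_nonneg (by positivity) hop0
  · rw [div_mul_eq_mul_div, le_div_iff₀ hp]
    nlinarith [hfinal, mul_pos hp h0]
end

section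
/- (Minimax lower bound from missing entries; holds even for noiseless observations.) Let r, k, ℓ be positive integers, m = rk, n = rℓ, λmax > 0, and σ₂ = √k·λmax. Let S₂ be the set of m×n matrices M with entries in [0, λmax], rank(M) ≤ r, and √(max_i Σ_j M_ij²) + √(max_j Σ_i M_ij²) ≤ 2σ₂. Suppose p ∈ (0,1] satisfies p ≥ r/(2·min(m,n)). Consider the observation model in which Ω is drawn from the Bernoulli sampling model with probability p and the learner observes Ω together with the exact entries M_ij for (i,j) ∈ Ω. Then for every measurable estimator M̂ of M from these observations, sup over M ∈ S₂ of E_M‖M̂ − M‖_F² is at least (r·σ₂²/8)·max{ (1/2)·⌊1/(2p)⌋, 1 − p }, which is at least (1/64)·((1−p)/p)·r·σ₂². -/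
open MeasureTheory ProbabilityTheory Real Matrix

instance matrixMeasurableSpace {m n : ℕ} {α : Type*} [MeasurableSpace α] :
    MeasurableSpace (Matrix (Fin m) (Fin n) α) :=
  (inferInstance : MeasurableSpace ((Fin m) → (Fin n) → α))

/-- Joint law of the noiseless data: for each entry `(i,j)`, independently, with
probability `p` we observe the exact value `M i j` (flag `true`), otherwise nothing. -/
noncomputable def noiselessObsMeasure {m n : ℕ} (p : ℝ) (M : Matrix (Fin m) (Fin n) ℝ) :
    Measure ((Fin m × Fin n) → Bool × ℝ) :=
  Measure.pi fun ij =>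
    ENNReal.ofReal (1 - p) • Measure.dirac (false, 0) +
      ENNReal.ofReal p • Measure.dirac (true, M ij.1 ij.2)

namespace Stmt17Aux
open Function
open scoped ENNReal

/-- The single-entry observation law. -/
noncomputable def bFac (q v : ℝ) : Measure (Bool × ℝ) :=
  ENNReal.ofReal (1 - q) • Measure.dirac (false, 0) + ENNReal.ofReal q • Measure.dirac (true, v)

instance bFac_finite (q v : ℝ) : IsFiniteMeasure (bFac q v) := by
  constructor
  simp only [bFac, Measure.add_apply, Measure.smul_apply, measure_univ, smul_eq_mul, mul_one]
  exact ENNReal.add_lt_top.mpr ⟨ENNReal.ofReal_lt_top, ENNReal.ofReal_lt_top⟩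

lemma bFac_prob {q : ℝ} (h0 : 0 ≤ q) (h1 : q ≤ 1) (v : ℝ) :
    IsProbabilityMeasure (bFac q v) := by
  constructor
  simp only [bFac, Measure.add_apply, Measure.smul_apply, measure_univ, smul_eq_mul, mul_one]
  rw [← ENNReal.ofReal_add (by linarith) h0]
  norm_num

lemma noiselessObsMeasure_eq {m n : ℕ} (p : ℝ) (M : Matrix (Fin m) (Fin n) ℝ) :
    noiselessObsMeasure p M = Measure.pi fun ij => bFac p (M ij.1 ij.2) := rfl

lemma lintegral_bFac (q v : ℝ) (g : Bool × ℝ → ℝ≥0∞) (hg : Measurable g) :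
    ∫⁻ z, g z ∂(bFac q v)
      = ENNReal.ofReal (1 - q) * g (false, 0) + ENNReal.ofReal q * g (true, v) := by
  rw [bFac, lintegral_add_measure, lintegral_smul_measure, lintegral_smul_measure,
    lintegral_dirac' _ hg, lintegral_dirac' _ hg, smul_eq_mul, smul_eq_mul]

lemma peel_lemma {δ : Type*} [DecidableEq δ] {X : δ → Type*} [∀ i, MeasurableSpace (X i)]
    (μ : ∀ i, Measure (X i)) [∀ i, SigmaFinite (μ i)] (a : ∀ i, X i) (c : ℝ≥0∞)
    (hμ : ∀ i, ∀ g : X i → ℝ≥0∞, Measurable g → c * g (a i) ≤ ∫⁻ z, g z ∂(μ i)) :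
    ∀ (D : Finset δ) (f : (∀ i, X i) → ℝ≥0∞), Measurable f → ∀ x : ∀ i, X i,
      c ^ D.card * f (updateFinset x D fun i : D => a i) ≤ (∫⋯∫⁻_D, f ∂μ) x := by
  intro D
  induction D using Finset.induction_on with
  | empty => intro f hf x; simp
  | @insert i D hiD ih =>
    intro f hf x
    rw [lmarginal_insert _ hf hiD]
    have hpt : updateFinset (Function.update x i (a i)) D (fun j : D => a j)
        = updateFinset x (insert i D) (fun j : (insert i D : Finset δ) => a j) := by
      funext j
      simp only [updateFinset, Finset.mem_insert, Function.update]
      by_cases hjD : j ∈ D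
      · simp [hjD]
      · by_cases hji : j = i
        · subst hji; simp [hjD]
        · simp [hjD, hji]
    calc c ^ (insert i D).card * f (updateFinset x (insert i D) fun j => a j)
        = c * (c ^ D.card * f (updateFinset (Function.update x i (a i)) D fun j => a j)) := by
          rw [Finset.card_insert_of_notMem hiD, hpt]; ring
      _ ≤ c * ((∫⋯∫⁻_D, f ∂μ) (Function.update x i (a i))) := by
          gcongr; exact ih f hf (Function.update x i (a i))
      _ ≤ ∫⁻ xᵢ, (∫⋯∫⁻_D, f ∂μ) (Function.update x i xᵢ) ∂μ i :=
          hμ i _ ((Measurable.lmarginal μ hf).comp (measurable_update x))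

lemma pair_bound {m n : ℕ} (p : ℝ) (hp : 0 < p) (hp1 : p ≤ 1)
    (M₁ M₂ : Matrix (Fin m) (Fin n) ℝ) (D : Finset (Fin m × Fin n))
    (hagree : ∀ ij : Fin m × Fin n, ij ∉ D → M₁ ij.1 ij.2 = M₂ ij.1 ij.2)
    (f₁ f₂ : ((Fin m × Fin n) → Bool × ℝ) → ℝ≥0∞) (hf₁ : Measurable f₁) (hf₂ : Measurable f₂)
    (B : ℝ≥0∞) (hB : ∀ y, B ≤ f₁ y + f₂ y) :
    ENNReal.ofReal (1 - p) ^ D.card * B ≤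
      (∫⁻ y, f₁ y ∂noiselessObsMeasure p M₁) + (∫⁻ y, f₂ y ∂noiselessObsMeasure p M₂) := by
  classical
  set c := ENNReal.ofReal (1 - p) with hc
  set ν₁ : (Fin m × Fin n) → Measure (Bool × ℝ) := fun ij => bFac p (M₁ ij.1 ij.2) with hν₁
  set ν₂ : (Fin m × Fin n) → Measure (Bool × ℝ) := fun ij => bFac p (M₂ ij.1 ij.2) with hν₂
  set x₀ : (Fin m × Fin n) → Bool × ℝ := fun _ => (false, 0) with hx₀
  have hupd : ∀ (E : Finset (Fin m × Fin n)), updateFinset x₀ E (fun i : E => x₀ i) = x₀ := by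
    intro E; funext j; by_cases h : j ∈ E <;> simp [updateFinset, h]
  have hμ₁ : ∀ ij, ∀ g : Bool × ℝ → ℝ≥0∞, Measurable g → c * g (x₀ ij) ≤ ∫⁻ z, g z ∂(ν₁ ij) := by
    intro ij g hg
    rw [hν₁, lintegral_bFac _ _ _ hg]
    exact le_add_right le_rfl
  have hμ₂ : ∀ ij, ∀ g : Bool × ℝ → ℝ≥0∞, Measurable g → c * g (x₀ ij) ≤ ∫⁻ z, g z ∂(ν₂ ij) := by
    intro ij g hg
    rw [hν₂, lintegral_bFac _ _ _ hg]
    exact le_add_right le_rfl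
  have hcongr : (∫⋯∫⁻_Dᶜ, f₂ ∂ν₂) = (∫⋯∫⁻_Dᶜ, f₂ ∂ν₁) := by
    funext x
    simp only [lmarginal]
    congr 1
    congr 1
    funext ij
    have : M₂ (ij : Fin m × Fin n).1 (ij : Fin m × Fin n).2
        = M₁ (ij : Fin m × Fin n).1 (ij : Fin m × Fin n).2 :=
      (hagree ij.1 (Finset.mem_compl.mp ij.2)).symm
    simp [hν₁, hν₂, this]
  have hstep1 : c ^ D.card * ((∫⋯∫⁻_Dᶜ, f₁ ∂ν₁) x₀) ≤ ∫⁻ y, f₁ y ∂noiselessObsMeasure p M₁ := by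
    have h := peel_lemma ν₁ x₀ c hμ₁ D (∫⋯∫⁻_Dᶜ, f₁ ∂ν₁) (hf₁.lmarginal ν₁) x₀
    rw [hupd D] at h
    refine le_trans h (le_of_eq ?_)
    rw [noiselessObsMeasure_eq, ← hν₁, lintegral_eq_lmarginal_univ (μ := ν₁) x₀,
      ← Finset.union_compl D, lmarginal_union ν₁ f₁ hf₁ disjoint_compl_right]
  have hstep2 : c ^ D.card * ((∫⋯∫⁻_Dᶜ, f₂ ∂ν₁) x₀) ≤ ∫⁻ y, f₂ y ∂noiselessObsMeasure p M₂ := by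
    have h := peel_lemma ν₂ x₀ c hμ₂ D (∫⋯∫⁻_Dᶜ, f₂ ∂ν₂) (hf₂.lmarginal ν₂) x₀
    rw [hupd D] at h
    calc c ^ D.card * ((∫⋯∫⁻_Dᶜ, f₂ ∂ν₁) x₀)
        = c ^ D.card * ((∫⋯∫⁻_Dᶜ, f₂ ∂ν₂) x₀) := by rw [hcongr]
      _ ≤ (∫⋯∫⁻_D, (∫⋯∫⁻_Dᶜ, f₂ ∂ν₂) ∂ν₂) x₀ := h
      _ = ∫⁻ y, f₂ y ∂noiselessObsMeasure p M₂ := by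
          rw [noiselessObsMeasure_eq, ← hν₂, lintegral_eq_lmarginal_univ (μ := ν₂) x₀,
            ← Finset.union_compl D, lmarginal_union ν₂ f₂ hf₂ disjoint_compl_right]
  have hsum : B ≤ (∫⋯∫⁻_Dᶜ, f₁ ∂ν₁) x₀ + (∫⋯∫⁻_Dᶜ, f₂ ∂ν₁) x₀ := by
    simp only [lmarginal]
    have hg₁ : Measurable (fun y : (ij : ↥(Dᶜ)) → Bool × ℝ => f₁ (updateFinset x₀ Dᶜ y)) :=
      hf₁.comp measurable_updateFinset
    rw [← lintegral_add_left hg₁]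
    haveI : ∀ ij : ↥(Dᶜ), IsProbabilityMeasure (ν₁ ij) := fun ij => bFac_prob hp.le hp1 _
    haveI : IsProbabilityMeasure (Measure.pi fun ij : ↥(Dᶜ) => ν₁ ij) := inferInstance
    calc B = ∫⁻ _, B ∂(Measure.pi fun ij : ↥(Dᶜ) => ν₁ ij) := by simp
      _ ≤ _ := lintegral_mono fun y => hB _
  calc c ^ D.card * B
      ≤ c ^ D.card * ((∫⋯∫⁻_Dᶜ, f₁ ∂ν₁) x₀ + (∫⋯∫⁻_Dᶜ, f₂ ∂ν₁) x₀) := by gcongr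
    _ = c ^ D.card * ((∫⋯∫⁻_Dᶜ, f₁ ∂ν₁) x₀) + c ^ D.card * ((∫⋯∫⁻_Dᶜ, f₂ ∂ν₁) x₀) := mul_add _ _ _
    _ ≤ _ := add_le_add hstep1 hstep2

variable (r k ℓ : ℕ) (lamMax : ℝ)

/-- the hypothesis matrix indexed by a boolean row pattern -/
noncomputable def MM (s : ℕ) (u : Fin (r*k) → Bool) : Matrix (Fin (r*k)) (Fin (r*ℓ)) ℝ :=
  fun i j =>
    if u i = true ∧ (i.val / k) * ℓ ≤ j.val ∧ j.val < (i.val / k) * ℓ + s then lamMax else 0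

/-- the window of columns attached to row i -/
def Wnd (s : ℕ) (i : Fin (r*k)) : Finset (Fin (r*ℓ)) :=
  Finset.univ.filter fun j => (i.val / k) * ℓ ≤ j.val ∧ j.val < (i.val / k) * ℓ + s

lemma grp_lt (hk : 0 < k) (i : Fin (r*k)) : i.val / k < r :=
  Nat.div_lt_of_lt_mul (by simpa [mul_comm] using i.2)

lemma Wnd_card (hk : 0 < k) (s : ℕ) (hsl : s ≤ ℓ) (i : Fin (r*k)) :
    (Wnd r k ℓ s i).card = s := by
  have hik : i.val / k < r := grp_lt r k hk i
  have hbound : (i.val / k) * ℓ + s ≤ r * ℓ := by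
    have h2 : (i.val / k + 1) * ℓ ≤ r * ℓ := Nat.mul_le_mul_right ℓ (by omega)
    rw [Nat.succ_mul] at h2
    omega
  set a := (i.val / k) * ℓ with ha
  have himg : (Wnd r k ℓ s i).image Fin.val = Finset.Ico a (a + s) := by
    ext x
    simp only [Finset.mem_image, Finset.mem_Ico, Wnd, Finset.mem_filter, Finset.mem_univ,
      true_and]
    constructor
    · rintro ⟨j, ⟨h1, h2⟩, rfl⟩; exact ⟨h1, h2⟩
    · rintro ⟨h1, h2⟩; exact ⟨⟨x, by omega⟩, ⟨h1, h2⟩, rfl⟩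
  have := Finset.card_image_of_injective (Wnd r k ℓ s i) Fin.val_injective
  rw [himg] at this
  rw [← this, Nat.card_Ico]
  omega

lemma MM_rank (hk : 0 < k) (s : ℕ) (u : Fin (r*k) → Bool) :
    (MM r k ℓ lamMax s u).rank ≤ r := by
  classical
  set A : Matrix (Fin (r*k)) (Fin r) ℝ :=
    fun i g => if u i = true ∧ i.val / k = g.val then lamMax else 0 with hA
  set B : Matrix (Fin r) (Fin (r*ℓ)) ℝ :=
    fun g j => if g.val * ℓ ≤ j.val ∧ j.val < g.val * ℓ + s then 1 else 0 with hB
  have hfact : MM r k ℓ lamMax s u = A * B := by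
    funext i j
    rw [Matrix.mul_apply]
    have hik : i.val / k < r := grp_lt r k hk i
    rw [Finset.sum_eq_single (⟨i.val / k, hik⟩ : Fin r)]
    · simp only [MM, hA, hB]
      by_cases hu : u i = true
      · simp only [hu, true_and]
        by_cases hw : (i.val / k) * ℓ ≤ j.val ∧ j.val < (i.val / k) * ℓ + s
        · simp [hw]
        · simp [hw]
      · simp [hu]
    · intro g _ hg
      have : i.val / k ≠ g.val := fun h => hg (Fin.ext h.symm)
      simp [hA, this]
    · intro h; exact absurd (Finset.mem_univ _) h
  rw [hfact]
  calc (A * B).rank ≤ A.rank := Matrix.rank_mul_le_left A B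
    _ ≤ Fintype.card (Fin r) := Matrix.rank_le_card_width A
    _ = r := Fintype.card_fin r

lemma MM_row_sum (hk : 0 < k) (s : ℕ) (hsl : s ≤ ℓ)
    (u : Fin (r*k) → Bool) (i : Fin (r*k)) :
    ∑ j, (MM r k ℓ lamMax s u i j)^2 ≤ s * lamMax^2 := by
  classical
  have h1 : ∀ j, (MM r k ℓ lamMax s u i j)^2
      = if (u i = true ∧ (i.val / k) * ℓ ≤ j.val ∧ j.val < (i.val / k) * ℓ + s)
        then lamMax^2 else 0 := by
    intro j; simp only [MM]; split <;> simp
  calc ∑ j, (MM r k ℓ lamMax s u i j)^2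
      = ∑ j ∈ Finset.univ.filter (fun j : Fin (r*ℓ) =>
          u i = true ∧ (i.val / k) * ℓ ≤ j.val ∧ j.val < (i.val / k) * ℓ + s), lamMax^2 := by
        rw [Finset.sum_filter]; exact Finset.sum_congr rfl fun j _ => h1 j
    _ ≤ (Finset.univ.filter (fun j : Fin (r*ℓ) =>
          u i = true ∧ (i.val / k) * ℓ ≤ j.val ∧ j.val < (i.val / k) * ℓ + s)).card
          * lamMax^2 := by
        rw [Finset.sum_const, nsmul_eq_mul]
    _ ≤ s * lamMax^2 := by
        have hsub : (Finset.univ.filter (fun j : Fin (r*ℓ) =>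
            u i = true ∧ (i.val / k) * ℓ ≤ j.val ∧ j.val < (i.val / k) * ℓ + s))
            ⊆ Wnd r k ℓ s i := by
          intro j hj
          simp only [Finset.mem_filter] at hj
          simp only [Wnd, Finset.mem_filter]
          exact ⟨hj.1, hj.2.2⟩
        have hcard := Finset.card_le_card hsub
        rw [Wnd_card r k ℓ hk s hsl i] at hcard
        exact mul_le_mul_of_nonneg_right (by exact_mod_cast hcard) (sq_nonneg lamMax)

lemma MM_col_sum (hk : 0 < k) (s : ℕ) (hsl : s ≤ ℓ)
    (u : Fin (r*k) → Bool) (j : Fin (r*ℓ)) :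
    ∑ i, (MM r k ℓ lamMax s u i j)^2 ≤ k * lamMax^2 := by
  classical
  set q := j.val / ℓ with hq
  set C := Finset.univ.filter (fun i : Fin (r*k) =>
    u i = true ∧ (i.val / k) * ℓ ≤ j.val ∧ j.val < (i.val / k) * ℓ + s) with hC
  have h1 : ∀ i, (MM r k ℓ lamMax s u i j)^2
      = if (u i = true ∧ (i.val / k) * ℓ ≤ j.val ∧ j.val < (i.val / k) * ℓ + s)
        then lamMax^2 else 0 := by
    intro i; simp only [MM]; split <;> simp
  have hgrp : ∀ i : Fin (r*k), i ∈ C → i.val / k = q := by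
    intro i hi
    simp only [hC, Finset.mem_filter] at hi
    have h2 : j.val < (i.val / k + 1) * ℓ := by rw [Nat.succ_mul]; omega
    rw [hq]
    exact (Nat.div_eq_of_lt_le hi.2.2.1 h2).symm
  have himg : C.image Fin.val ⊆ Finset.Ico (q * k) (q * k + k) := by
    intro x hx
    simp only [Finset.mem_image] at hx
    obtain ⟨i, hi, rfl⟩ := hx
    have hdiv := hgrp i hi
    have ha : (i.val / k) * k ≤ i.val := Nat.div_mul_le_self _ _
    have hb : i.val < (i.val / k) * k + k := by
      have hdm := Nat.div_add_mod i.val k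
      have hm := Nat.mod_lt i.val hk
      rw [mul_comm k (i.val / k)] at hdm
      omega
    rw [hdiv] at ha hb
    simp only [Finset.mem_Ico]
    omega
  have hcard : C.card ≤ k := by
    have := Finset.card_le_card himg
    rw [Finset.card_image_of_injective C Fin.val_injective] at this
    simpa [Nat.card_Ico] using this
  calc ∑ i, (MM r k ℓ lamMax s u i j)^2
      = ∑ i ∈ C, lamMax^2 := by
        rw [hC, Finset.sum_filter]; exact Finset.sum_congr rfl fun i _ => h1 i
    _ = C.card * lamMax^2 := by rw [Finset.sum_const, nsmul_eq_mul]
    _ ≤ k * lamMax^2 := mul_le_mul_of_nonneg_right (by exact_mod_cast hcard) (sq_nonneg lamMax)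

end Stmt17Aux

open Function Stmt17Aux
open scoped ENNReal

set_option maxHeartbeats 2000000 in
theorem stmt17 (r k ℓ : ℕ) (hr : 0 < r) (hk : 0 < k) (hℓ : 0 < ℓ)
    (p lamMax : ℝ) (hlam : 0 < lamMax) (hp : 0 < p) (hp1 : p ≤ 1)
    (hp2 : (r : ℝ) / (2 * min (r * k : ℝ) (r * ℓ : ℝ)) ≤ p)
    (Mhat : ((Fin (r * k) × Fin (r * ℓ)) → Bool × ℝ) → Matrix (Fin (r * k)) (Fin (r * ℓ)) ℝ)
    (hmeas : Measurable Mhat) :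
    (∃ M : Matrix (Fin (r * k)) (Fin (r * ℓ)) ℝ,
      ((∀ i j, 0 ≤ M i j ∧ M i j ≤ lamMax) ∧ M.rank ≤ r ∧
        Real.sqrt (⨆ i, ∑ j, (M i j)^2) + Real.sqrt (⨆ j, ∑ i, (M i j)^2) ≤
          2 * (Real.sqrt k * lamMax)) ∧
      ENNReal.ofReal ((r * (k * lamMax^2) / 8) *
          max ((1 / 2) * (⌊1 / (2 * p)⌋ : ℝ)) (1 - p)) ≤
        ∫⁻ y, ENNReal.ofReal ((frobNorm (Mhat y - M))^2) ∂(noiselessObsMeasure p M)) ∧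
    (1 / 64) * ((1 - p) / p) * r * (k * lamMax^2) ≤
      (r * (k * lamMax^2) / 8) * max ((1 / 2) * (⌊1 / (2 * p)⌋ : ℝ)) (1 - p) := by
  classical
  -- basic numerics about the floor
  have hqpos : (0:ℝ) < 1 / (2 * p) := by positivity
  set t : ℕ := (⌊1 / (2 * p)⌋).toNat with ht
  have htcast : ((⌊1 / (2 * p)⌋ : ℤ) : ℝ) = (t : ℝ) := by
    have h := Int.toNat_of_nonneg (Int.floor_nonneg.mpr hqpos.le)
    exact_mod_cast congrArg (Int.cast : ℤ → ℝ) h.symm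
  have htle : (t : ℝ) ≤ 1 / (2 * p) := htcast ▸ Int.floor_le _
  have hrpos : (0:ℝ) < r := Nat.cast_pos.mpr hr
  have hklpos : (0:ℝ) < min (k:ℝ) (ℓ:ℝ) :=
    lt_min (Nat.cast_pos.mpr hk) (Nat.cast_pos.mpr hℓ)
  have hminkl : min ((r:ℝ) * k) ((r:ℝ) * ℓ) = (r:ℝ) * min (k:ℝ) (ℓ:ℝ) := by
    rcases le_total (k:ℝ) (ℓ:ℝ) with h | h
    · rw [min_eq_left h, min_eq_left (mul_le_mul_of_nonneg_left h hrpos.le)]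
    · rw [min_eq_right h, min_eq_right (mul_le_mul_of_nonneg_left h hrpos.le)]
  have hp2'' : 1 / (2 * min (k:ℝ) (ℓ:ℝ)) ≤ p := by
    rw [hminkl] at hp2
    calc 1 / (2 * min (k:ℝ) (ℓ:ℝ)) = (r:ℝ) / (2 * ((r:ℝ) * min (k:ℝ) (ℓ:ℝ))) := by
          field_simp
      _ ≤ p := hp2
  have hp2' : 1 / (2 * p) ≤ min (k:ℝ) (ℓ:ℝ) := by
    rw [div_le_iff₀ (by positivity)] at hp2'' ⊢
    calc (1:ℝ) ≤ p * (2 * min (k:ℝ) (ℓ:ℝ)) := hp2''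
      _ = min (k:ℝ) (ℓ:ℝ) * (2 * p) := by ring
  have htk : t ≤ k := by
    have : (t:ℝ) ≤ (k:ℝ) := le_trans htle (le_trans hp2' (min_le_left _ _))
    exact_mod_cast this
  have htl : t ≤ ℓ := by
    have : (t:ℝ) ≤ (ℓ:ℝ) := le_trans htle (le_trans hp2' (min_le_right _ _))
    exact_mod_cast this
  set s : ℕ := max t 1 with hs
  have hs1 : 1 ≤ s := le_max_right _ _
  have hsk : s ≤ k := max_le htk hk
  have hsl : s ≤ ℓ := max_le htl hℓ
  -- the key real inequality
  have h1p : (0:ℝ) ≤ 1 - p := by linarith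
  have hkey : max ((1/2) * (t:ℝ)) (1 - p) ≤ 2 * s * (1 - p)^s := by
    rcases Nat.eq_zero_or_pos t with h0 | hpos
    · have hs1' : s = 1 := by omega
      rw [hs1', h0]
      simp only [Nat.cast_zero, Nat.cast_one, pow_one, mul_zero]
      refine max_le (by linarith) (by linarith)
    · have hst : s = t := by rw [hs]; omega
      have htp : (t:ℝ) * p ≤ 1/2 := by
        have h' := mul_le_mul_of_nonneg_right htle hp.le
        have he : 1 / (2 * p) * p = 1/2 := by field_simp
        linarith
      have hber : 1 - (t:ℝ) * p ≤ (1 - p)^t := by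
        have := one_add_mul_le_pow (show (-2:ℝ) ≤ -p by linarith) t
        calc 1 - (t:ℝ) * p = 1 + (t:ℝ) * (-p) := by ring
          _ ≤ (1 + (-p))^t := this
          _ = (1 - p)^t := by ring_nf
      have hhalf : (1/2 : ℝ) ≤ (1 - p)^t := by linarith
      have ht1 : (1:ℝ) ≤ (t:ℝ) := by exact_mod_cast hpos
      rw [hst]
      refine max_le ?_ ?_
      · nlinarith
      · nlinarith
  -- final conjunct
  have hmaxkey : (1 - p)/(8*p) ≤ max ((1 / 2) * (⌊1 / (2 * p)⌋ : ℝ)) (1 - p) := by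
    rcases le_or_gt (1/8 : ℝ) p with h8 | h8
    · refine le_trans ?_ (le_max_right _ _)
      exact div_le_self h1p (by linarith)
    · refine le_trans ?_ (le_max_left _ _)
      have hfl : 1/(2*p) - 1 ≤ (⌊1/(2*p)⌋:ℝ) := by
        have := Int.sub_one_lt_floor (1/(2*p))
        linarith
      have hx4 : (4:ℝ) ≤ 1/(2*p) := by
        rw [le_div_iff₀ (by positivity)]
        linarith
      calc (1 - p)/(8*p) ≤ 1/(8*p) := by gcongr; linarith
        _ = (1/(2*p))/4 := by field_simp; ring
        _ ≤ (1/(2*p) - 1)/2 := by linarith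
        _ ≤ (1 / 2) * (⌊1 / (2 * p)⌋ : ℝ) := by linarith
  have harith2 : (1 / 64) * ((1 - p) / p) * r * (k * lamMax^2) ≤
      (r * (k * lamMax^2) / 8) * max ((1 / 2) * (⌊1 / (2 * p)⌋ : ℝ)) (1 - p) := by
    calc (1 / 64) * ((1 - p) / p) * r * (k * lamMax^2)
        = (r * (k * lamMax^2) / 8) * ((1 - p)/(8*p)) := by ring
      _ ≤ _ := mul_le_mul_of_nonneg_left hmaxkey (by positivity)
  refine ⟨?_, harith2⟩
  -- membership of every hypothesis matrix
  have hmem : ∀ u : Fin (r*k) → Bool,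
      (∀ i j, 0 ≤ MM r k ℓ lamMax s u i j ∧ MM r k ℓ lamMax s u i j ≤ lamMax) ∧
      (MM r k ℓ lamMax s u).rank ≤ r ∧
      Real.sqrt (⨆ i, ∑ j, (MM r k ℓ lamMax s u i j)^2) +
        Real.sqrt (⨆ j, ∑ i, (MM r k ℓ lamMax s u i j)^2) ≤ 2 * (Real.sqrt k * lamMax) := by
    intro u
    haveI hne1 : Nonempty (Fin (r*k)) := ⟨⟨0, Nat.mul_pos hr hk⟩⟩
    haveI hne2 : Nonempty (Fin (r*ℓ)) := ⟨⟨0, Nat.mul_pos hr hℓ⟩⟩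
    refine ⟨?_, MM_rank r k ℓ lamMax hk s u, ?_⟩
    · intro i j
      simp only [MM]
      split
      · exact ⟨hlam.le, le_refl _⟩
      · exact ⟨le_refl _, hlam.le⟩
    · have hsqrtk : Real.sqrt ((k:ℝ) * lamMax^2) = Real.sqrt k * lamMax := by
        rw [Real.sqrt_mul (Nat.cast_nonneg k), Real.sqrt_sq hlam.le]
      have hrow : Real.sqrt (⨆ i, ∑ j, (MM r k ℓ lamMax s u i j)^2)
          ≤ Real.sqrt ((k:ℝ) * lamMax^2) := by
        apply Real.sqrt_le_sqrt
        apply ciSup_le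
        intro i
        refine le_trans (MM_row_sum r k ℓ lamMax hk s hsl u i) ?_
        have : (s:ℝ) ≤ (k:ℝ) := Nat.cast_le.mpr hsk
        nlinarith [sq_nonneg lamMax]
      have hcol : Real.sqrt (⨆ j, ∑ i, (MM r k ℓ lamMax s u i j)^2)
          ≤ Real.sqrt ((k:ℝ) * lamMax^2) := by
        apply Real.sqrt_le_sqrt
        exact ciSup_le fun j => MM_col_sum r k ℓ lamMax hk s hsl u j
      rw [hsqrtk] at hrow hcol
      linarith
  -- the existence of a bad hypothesis
  have hcore : ∃ u : Fin (r*k) → Bool,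
      ENNReal.ofReal ((r * (k * lamMax^2) / 8) * max ((1 / 2) * (⌊1 / (2 * p)⌋ : ℝ)) (1 - p)) ≤
      ∫⁻ y, ENNReal.ofReal ((frobNorm (Mhat y - MM r k ℓ lamMax s u))^2)
        ∂(noiselessObsMeasure p (MM r k ℓ lamMax s u)) := by
    set T : ℝ := (r * (k * lamMax^2) / 8) * max ((1 / 2) * (⌊1 / (2 * p)⌋ : ℝ)) (1 - p) with hT
    set Mn : (Fin (r*k) → Bool) → Matrix (Fin (r*k)) (Fin (r*ℓ)) ℝ :=
      fun u => MM r k ℓ lamMax s u with hMn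
    have hentry : ∀ (i : Fin (r*k)) (j : Fin (r*ℓ)),
        Measurable fun y : (Fin (r*k) × Fin (r*ℓ)) → Bool × ℝ => Mhat y i j := fun i j =>
      (measurable_pi_apply j).comp ((measurable_pi_apply i).comp hmeas)
    set f : (Fin (r*k) → Bool) → Fin (r*k) → ((Fin (r*k) × Fin (r*ℓ)) → Bool × ℝ) → ℝ≥0∞ :=
      fun u i y => ENNReal.ofReal (∑ j ∈ Wnd r k ℓ s i, (Mhat y i j - Mn u i j)^2) with hf
    have hfmeas : ∀ u i, Measurable (f u i) := fun u i =>
      (Finset.measurable_sum _ fun j _ =>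
        ((hentry i j).sub measurable_const).pow_const 2).ennreal_ofReal
    set I : (Fin (r*k) → Bool) → Fin (r*k) → ℝ≥0∞ :=
      fun u i => ∫⁻ y, f u i y ∂(noiselessObsMeasure p (Mn u)) with hI
    set E : (Fin (r*k) → Bool) → ℝ≥0∞ := fun u =>
      ∫⁻ y, ENNReal.ofReal ((frobNorm (Mhat y - Mn u))^2) ∂(noiselessObsMeasure p (Mn u)) with hE
    -- Step 1: the full loss dominates the sum of windowed losses
    have hS1 : ∀ u, ∑ i, I u i ≤ E u := by
      intro u
      calc ∑ i, I u i
          = ∫⁻ y, ∑ i, f u i y ∂(noiselessObsMeasure p (Mn u)) :=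
            (lintegral_finset_sum _ (fun i _ => hfmeas u i)).symm
        _ ≤ E u := by
            apply lintegral_mono
            intro y
            have hsq : (frobNorm (Mhat y - Mn u))^2 = ∑ i, ∑ j, ((Mhat y - Mn u) i j)^2 := by
              rw [frobNorm, Real.sq_sqrt]
              exact Finset.sum_nonneg fun i _ => Finset.sum_nonneg fun j _ => sq_nonneg _
            simp only [hf]
            rw [← ENNReal.ofReal_sum_of_nonneg (fun i _ =>
              Finset.sum_nonneg fun j _ => sq_nonneg _)]
            apply ENNReal.ofReal_le_ofReal
            rw [hsq]
            apply Finset.sum_le_sum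
            intro i _
            have heq : ∀ j, (Mhat y i j - Mn u i j)^2 = ((Mhat y - Mn u) i j)^2 := by
              intro j; rw [Matrix.sub_apply]
            calc ∑ j ∈ Wnd r k ℓ s i, (Mhat y i j - Mn u i j)^2
                = ∑ j ∈ Wnd r k ℓ s i, ((Mhat y - Mn u) i j)^2 :=
                  Finset.sum_congr rfl fun j _ => heq j
              _ ≤ ∑ j, ((Mhat y - Mn u) i j)^2 :=
                  Finset.sum_le_sum_of_subset_of_nonneg (Finset.subset_univ _)
                    (fun j _ _ => sq_nonneg _)
    -- the flip involution
    set flip : Fin (r*k) → (Fin (r*k) → Bool) → (Fin (r*k) → Bool) :=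
      fun i u => Function.update u i (!u i) with hflip
    have hflipinv : ∀ i, Function.Involutive (flip i) := by
      intro i u
      funext j
      by_cases hj : j = i
      · subst hj; simp [hflip, Function.update_self]
      · simp [hflip, Function.update_of_ne hj]
    -- Step 2: pairwise lower bound
    set CC : ℝ≥0∞ := ENNReal.ofReal ((1-p)^s * (s * lamMax^2 / 2)) with hCC
    have hCC' : CC = (ENNReal.ofReal (1-p))^s * ENNReal.ofReal (s * lamMax^2 / 2) := by
      rw [hCC, ENNReal.ofReal_mul (pow_nonneg h1p s), ENNReal.ofReal_pow h1p]
    have hS2 : ∀ (i : Fin (r*k)) (u : Fin (r*k) → Bool), CC ≤ I u i + I (flip i u) i := by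
      intro i u
      have hD : ({i} ×ˢ Wnd r k ℓ s i).card = s := by
        rw [Finset.card_product, Finset.card_singleton, one_mul, Wnd_card r k ℓ hk s hsl]
      have hui' : flip i u i = !(u i) := by rw [hflip]; simp [Function.update_self]
      have hagree : ∀ ij : Fin (r*k) × Fin (r*ℓ), ij ∉ ({i} ×ˢ Wnd r k ℓ s i) →
          Mn u ij.1 ij.2 = Mn (flip i u) ij.1 ij.2 := by
        rintro ⟨i₁, j₁⟩ hij
        by_cases hne : i₁ = i
        · subst hne
          have hnw : j₁ ∉ Wnd r k ℓ s i₁ := fun hw =>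
            hij (Finset.mem_product.mpr ⟨Finset.mem_singleton_self _, hw⟩)
          have hw : ¬((i₁.val / k) * ℓ ≤ j₁.val ∧ j₁.val < (i₁.val / k) * ℓ + s) := by
            simpa [Wnd, Finset.mem_filter] using hnw
          simp only [hMn, MM, hw, and_false, if_false]
        · have : flip i u i₁ = u i₁ := by rw [hflip]; simp [Function.update_of_ne hne]
          simp only [hMn, MM, this]
      have hB : ∀ y, ENNReal.ofReal (s * lamMax^2 / 2) ≤ f u i y + f (flip i u) i y := by
        intro y
        have hcases : ∀ j ∈ Wnd r k ℓ s i, lamMax^2/2 ≤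
            (Mhat y i j - Mn u i j)^2 + (Mhat y i j - Mn (flip i u) i j)^2 := by
          intro j hj
          have hw : (i.val / k) * ℓ ≤ j.val ∧ j.val < (i.val / k) * ℓ + s := by
            simpa [Wnd, Finset.mem_filter] using hj
          have hvals : (Mn u i j = 0 ∧ Mn (flip i u) i j = lamMax) ∨
              (Mn u i j = lamMax ∧ Mn (flip i u) i j = 0) := by
            simp only [hMn, MM, hw, and_true, hui']
            cases hub : u i
            · left; simp
            · right; simp
          rcases hvals with ⟨h1, h2⟩ | ⟨h1, h2⟩ <;> rw [h1, h2] <;>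
            nlinarith [sq_nonneg (2 * Mhat y i j - lamMax)]
        have hsum2 : (s:ℝ) * (lamMax^2/2) ≤
            ∑ j ∈ Wnd r k ℓ s i,
              ((Mhat y i j - Mn u i j)^2 + (Mhat y i j - Mn (flip i u) i j)^2) := by
          have := Finset.card_nsmul_le_sum (Wnd r k ℓ s i) _ _ hcases
          rwa [Wnd_card r k ℓ hk s hsl, nsmul_eq_mul] at this
        calc ENNReal.ofReal (s * lamMax^2 / 2)
            ≤ ENNReal.ofReal (∑ j ∈ Wnd r k ℓ s i,
                ((Mhat y i j - Mn u i j)^2 + (Mhat y i j - Mn (flip i u) i j)^2)) := by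
              apply ENNReal.ofReal_le_ofReal
              calc (s:ℝ) * lamMax^2 / 2 = (s:ℝ) * (lamMax^2/2) := by ring
                _ ≤ _ := hsum2
          _ = f u i y + f (flip i u) i y := by
              rw [Finset.sum_add_distrib, hf,
                ENNReal.ofReal_add (Finset.sum_nonneg fun j _ => sq_nonneg _)
                  (Finset.sum_nonneg fun j _ => sq_nonneg _)]
      have := pair_bound p hp hp1 (Mn u) (Mn (flip i u)) ({i} ×ˢ Wnd r k ℓ s i) hagree
        (f u i) (f (flip i u) i) (hfmeas u i) (hfmeas (flip i u) i)
        (ENNReal.ofReal (s * lamMax^2 / 2)) hB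
      rw [hD] at this
      rw [hCC']
      exact this
    -- Step 3: sum over the hypercube
    have hflipsum : ∀ i : Fin (r*k),
        ∑ u : Fin (r*k) → Bool, I (flip i u) i = ∑ u : Fin (r*k) → Bool, I u i := by
      intro i
      exact Equiv.sum_comp ((hflipinv i).toPerm (flip i)) (fun u => I u i)
    have hcard : (Finset.univ : Finset (Fin (r*k) → Bool)).card = 2^(r*k) := by
      rw [Finset.card_univ]
      simp [Fintype.card_fun]
    have hsum2 : ∀ i : Fin (r*k), (2:ℝ≥0∞)^(r*k) * CC ≤ 2 * ∑ u : Fin (r*k) → Bool, I u i := by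
      intro i
      have h1 : ∑ _u : Fin (r*k) → Bool, CC ≤
          ∑ u : Fin (r*k) → Bool, (I u i + I (flip i u) i) :=
        Finset.sum_le_sum fun u _ => hS2 i u
      rw [Finset.sum_add_distrib, hflipsum i, Finset.sum_const, hcard, nsmul_eq_mul] at h1
      calc (2:ℝ≥0∞)^(r*k) * CC = ((2^(r*k) : ℕ) : ℝ≥0∞) * CC := by
            rw [Nat.cast_pow]; norm_num
        _ ≤ ∑ u : Fin (r*k) → Bool, I u i + ∑ u : Fin (r*k) → Bool, I u i := h1
        _ = 2 * ∑ u : Fin (r*k) → Bool, I u i := (two_mul _).symm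
    have htotal : ((r*k : ℕ) : ℝ≥0∞) * ((2:ℝ≥0∞)^(r*k) * CC) ≤
        2 * ∑ u : Fin (r*k) → Bool, E u := by
      calc ((r*k : ℕ) : ℝ≥0∞) * ((2:ℝ≥0∞)^(r*k) * CC)
          = ∑ _i : Fin (r*k), (2:ℝ≥0∞)^(r*k) * CC := by
            rw [Finset.sum_const, Finset.card_univ, Fintype.card_fin, nsmul_eq_mul]
        _ ≤ ∑ i : Fin (r*k), 2 * ∑ u : Fin (r*k) → Bool, I u i :=
            Finset.sum_le_sum fun i _ => hsum2 i
        _ = 2 * ∑ u : Fin (r*k) → Bool, ∑ i : Fin (r*k), I u i := by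
            rw [← Finset.mul_sum, Finset.sum_comm]
        _ ≤ 2 * ∑ u : Fin (r*k) → Bool, E u :=
            mul_le_mul_right (Finset.sum_le_sum fun u _ => hS1 u) 2
    -- relate CC to the target T
    have hTC : 2 * ENNReal.ofReal T ≤ ((r*k : ℕ) : ℝ≥0∞) * CC := by
      have hreal : 2 * T ≤ ((r*k : ℕ) : ℝ) * ((1-p)^s * (s * lamMax^2 / 2)) := by
        have hk2 : 2 * T = ((r:ℝ) * k * lamMax^2 / 4) * max ((1/2) * (t:ℝ)) (1 - p) := by
          rw [hT, htcast]
          ring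
        have := mul_le_mul_of_nonneg_left hkey
          (by positivity : (0:ℝ) ≤ (r:ℝ) * k * lamMax^2 / 4)
        rw [hk2]
        calc ((r:ℝ) * k * lamMax^2 / 4) * max ((1/2) * (t:ℝ)) (1 - p)
            ≤ ((r:ℝ) * k * lamMax^2 / 4) * (2 * s * (1 - p)^s) := this
          _ = ((r*k : ℕ) : ℝ) * ((1-p)^s * (s * lamMax^2 / 2)) := by
            push_cast
            ring
      calc 2 * ENNReal.ofReal T = ENNReal.ofReal (2 * T) := by
            rw [ENNReal.ofReal_mul (by norm_num : (0:ℝ) ≤ 2)]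
            norm_num
        _ ≤ ENNReal.ofReal (((r*k : ℕ) : ℝ) * ((1-p)^s * (s * lamMax^2 / 2))) :=
            ENNReal.ofReal_le_ofReal hreal
        _ = ((r*k : ℕ) : ℝ≥0∞) * CC := by
            rw [ENNReal.ofReal_mul (by positivity), hCC, ENNReal.ofReal_natCast]
    -- conclude by averaging
    have hfinal : ((2^(r*k) : ℕ) : ℝ≥0∞) * ENNReal.ofReal T ≤ ∑ u : Fin (r*k) → Bool, E u := by
      have h2 : 2 * (((2^(r*k) : ℕ) : ℝ≥0∞) * ENNReal.ofReal T) ≤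
          2 * ∑ u : Fin (r*k) → Bool, E u := by
        calc 2 * (((2^(r*k) : ℕ) : ℝ≥0∞) * ENNReal.ofReal T)
            = ((2^(r*k) : ℕ) : ℝ≥0∞) * (2 * ENNReal.ofReal T) := by ring
          _ ≤ ((2^(r*k) : ℕ) : ℝ≥0∞) * (((r*k : ℕ) : ℝ≥0∞) * CC) := by gcongr
          _ = ((r*k : ℕ) : ℝ≥0∞) * ((2:ℝ≥0∞)^(r*k) * CC) := by
              rw [Nat.cast_pow]; push_cast; ring
          _ ≤ 2 * ∑ u : Fin (r*k) → Bool, E u := htotal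
      exact (ENNReal.mul_le_mul_iff_right (by norm_num : (2:ℝ≥0∞) ≠ 0)
        (by norm_num : (2:ℝ≥0∞) ≠ ⊤)).mp h2
    have hsup : ∑ u : Fin (r*k) → Bool, E u ≤
        ((2^(r*k) : ℕ) : ℝ≥0∞) * Finset.univ.sup E := by
      have := Finset.sum_le_card_nsmul Finset.univ E (Finset.univ.sup E)
        (fun u _ => Finset.le_sup (Finset.mem_univ u))
      rwa [hcard, nsmul_eq_mul] at this
    have hTsup : ENNReal.ofReal T ≤ Finset.univ.sup E := by
      have hchain : ((2^(r*k) : ℕ) : ℝ≥0∞) * ENNReal.ofReal T ≤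
          ((2^(r*k) : ℕ) : ℝ≥0∞) * Finset.univ.sup E := le_trans hfinal hsup
      exact (ENNReal.mul_le_mul_iff_right
        (Nat.cast_ne_zero.mpr (pow_ne_zero _ two_ne_zero))
        (ENNReal.natCast_ne_top _)).mp hchain
    obtain ⟨u, _, hueq⟩ := Finset.exists_mem_eq_sup Finset.univ
      ⟨(fun _ => false), Finset.mem_univ _⟩ E
    rw [hueq] at hTsup
    exact ⟨u, hTsup⟩
  obtain ⟨u, hu⟩ := hcore
  exact ⟨MM r k ℓ lamMax s u, hmem u, hu⟩
end
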